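/- arXiv:1504.00596 — 3 statements merged into one kernel-verified Lean document; each statement's English description precedes it below -/
import Mathlib

section
/- For c ≥ 2 and r ≥ 1, let T_{c,r} be the tree consisting of (r+1)(c−1)^{r+1} paths, each on r + 1 vertices, all sharing a common first vertex (equivalently, a spider with (r+1)(c−1)^{r+1} legs each of length r). Then M_c(T_{c,r}) = (c − 1)·r. -/
open Classical SimpleGraph

/-- The spanning subgraph of `G` whose edges join vertices of equal colour under `ω`.
Its connected components are the monochromatic components of `(G, ω)`. -/
def monoSubgraph {V C : Type*} (G : SimpleGraph V) (ω : V → C) : SimpleGraph V where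
  Adj u v := G.Adj u v ∧ ω u = ω v
  symm := ⟨fun u v h => ⟨h.1.symm, h.2.symm⟩⟩
  loopless := ⟨fun u h => G.irrefl h.1⟩

/-- A single flooding move `(v, d)`: every vertex in the monochromatic component of `v`
receives colour `d`. -/
noncomputable def floodMove {V C : Type*} (G : SimpleGraph V) (ω : V → C) (v : V) (d : C) :
    V → C :=
  fun u => if (monoSubgraph G ω).Reachable v u then d else ω u

/-- Apply a sequence of flooding moves, in order. -/
noncomputable def floodSeq {V C : Type*} (G : SimpleGraph V) :
    List (V × C) → (V → C) → (V → C)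
  | [], ω => ω
  | m :: ms, ω => floodSeq G ms (floodMove G ω m.1 m.2)

/-- `m(G, ω, d)`: the minimum number of moves needed to give every vertex colour `d`,
starting from the colouring `ω`. -/
noncomputable def floodCost {V C : Type*} (G : SimpleGraph V) (ω : V → C) (d : C) : ℕ :=
  sInf {k | ∃ ms : List (V × C), ms.length = k ∧ ∀ v, floodSeq G ms ω v = d}

/-- `m(G, ω)`: the minimum over target colours `d ∈ C` of `m(G, ω, d)`. -/
noncomputable def floodCostMin {V C : Type*} (G : SimpleGraph V) (ω : V → C) : ℕ :=
  sInf {k | ∃ d : C, floodCost G ω d = k}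

/-- `M_c(G)`: the maximum of `m(G, ω)` over all surjective colourings
`ω : V(G) → {1, …, c}`. -/
noncomputable def maxFloodCost {V : Type*} (c : ℕ) (G : SimpleGraph V) : ℕ :=
  sSup {k | ∃ ω : V → Fin c, Function.Surjective ω ∧ floodCostMin G ω = k}

/-- The spider with `L` legs each of length `r`: a common centre vertex `none`, and leg
vertices `some (i, j)` — the `(j+1)`-st vertex of the `i`-th leg, at distance `j + 1`
from the centre. -/
def spider (L r : ℕ) : SimpleGraph (Option (Fin L × Fin r)) :=
  SimpleGraph.fromRel (fun u v =>
    match u, v with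
    | none, some (_, j) => (j : ℕ) = 0
    | some (i, j), some (i', j') => i = i' ∧ (j : ℕ) + 1 = (j' : ℕ)
    | _, _ => False)

section Basic
variable {V C : Type*} {G : SimpleGraph V} {ω : V → C}

lemma mono_adj {u v : V} (h : (monoSubgraph G ω).Adj u v) : G.Adj u v ∧ ω u = ω v := h

lemma reach_color {u v : V} (h : (monoSubgraph G ω).Reachable u v) : ω u = ω v := by
  obtain ⟨p⟩ := h
  induction p with
  | nil => rfl
  | cons h p ih => exact h.2.trans ih

lemma floodMove_of_reach {v u : V} {d : C} (h : (monoSubgraph G ω).Reachable v u) :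
    floodMove G ω v d u = d := if_pos h

lemma floodMove_of_not_reach {v u : V} {d : C} (h : ¬ (monoSubgraph G ω).Reachable v u) :
    floodMove G ω v d u = ω u := if_neg h

lemma floodMove_self (v : V) (d : C) : floodMove G ω v d v = d :=
  floodMove_of_reach (Reachable.refl v)

lemma floodMove_of_eq {v u : V} {d : C} (h : ω u = d) : floodMove G ω v d u = d := by
  unfold floodMove; split <;> simp [h]

/-- reachability from the move vertex is preserved by the move -/
lemma reach_floodMove_aux {v : V} {d : C} {a b : V}
    (p : (monoSubgraph G ω).Walk a b) (ha : (monoSubgraph G ω).Reachable v a) :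
    (monoSubgraph G (floodMove G ω v d)).Reachable a b := by
  induction p with
  | nil => exact Reachable.refl _
  | @cons x y z h q ih =>
    have hy : (monoSubgraph G ω).Reachable v y := ha.trans ⟨.cons h .nil⟩
    have hadj : (monoSubgraph G (floodMove G ω v d)).Adj x y :=
      ⟨h.1, by rw [floodMove_of_reach ha, floodMove_of_reach hy]⟩
    exact Reachable.trans ⟨.cons hadj .nil⟩ (ih hy)

lemma reach_floodMove {v u : V} {d : C} (h : (monoSubgraph G ω).Reachable v u) :
    (monoSubgraph G (floodMove G ω v d)).Reachable v u := by
  obtain ⟨p⟩ := h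
  exact reach_floodMove_aux p (Reachable.refl v)

lemma reach_floodMove_absorb {v w u : V} {d : C}
    (hw : (monoSubgraph G ω).Reachable v w) (hadj : G.Adj w u) (hu : ω u = d) :
    (monoSubgraph G (floodMove G ω v d)).Reachable v u := by
  have h1 : (monoSubgraph G (floodMove G ω v d)).Reachable v w := reach_floodMove hw
  have h2 : (monoSubgraph G (floodMove G ω v d)).Adj w u :=
    ⟨hadj, by rw [floodMove_of_reach hw, floodMove_of_eq hu]⟩
  exact h1.trans ⟨.cons h2 .nil⟩

lemma floodSeq_append (l1 l2 : List (V × C)) (ω : V → C) :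
    floodSeq G (l1 ++ l2) ω = floodSeq G l2 (floodSeq G l1 ω) := by
  induction l1 generalizing ω with
  | nil => rfl
  | cons m ms ih => simp [floodSeq, ih]

end Basic

section Spider
variable {L r : ℕ}

lemma spider_adj_center (i : Fin L) (j : Fin r) (h : (j : ℕ) = 0) :
    (spider L r).Adj none (some (i, j)) := by
  rw [spider, SimpleGraph.fromRel_adj]
  exact ⟨by simp, Or.inl h⟩

lemma spider_adj_leg (i : Fin L) (j j' : Fin r) (h : (j : ℕ) + 1 = (j' : ℕ)) :
    (spider L r).Adj (some (i, j)) (some (i, j')) := by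
  rw [spider, SimpleGraph.fromRel_adj]
  refine ⟨by simp only [ne_eq, Option.some_inj, Prod.mk.injEq]; rintro ⟨-, rfl⟩; omega,
    Or.inl ⟨rfl, h⟩⟩

end Spider

section Upper
variable {c : ℕ} {L r : ℕ}

/-- Moves at the centre, given a list of colours. -/
def ctrMoves (s : List (Fin c)) : List (Option (Fin L × Fin r) × Fin c) :=
  s.map (fun d => (none, d))

variable {G : SimpleGraph (Option (Fin L × Fin r))}

lemma reach_ctrSeq (s : List (Fin c)) {ω : Option (Fin L × Fin r) → Fin c}
    {u : Option (Fin L × Fin r)}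
    (h : (monoSubgraph G ω).Reachable none u) :
    (monoSubgraph G (floodSeq G (ctrMoves s) ω)).Reachable none u := by
  induction s generalizing ω with
  | nil => exact h
  | cons d s ih => exact ih (reach_floodMove h)

lemma absorb_ctrSeq (s : List (Fin c)) {ω : Option (Fin L × Fin r) → Fin c}
    {w u : Option (Fin L × Fin r)}
    (hw : (monoSubgraph G ω).Reachable none w) (hadj : G.Adj w u)
    (h : ω u = ω none ∨ ω u ∈ s) :
    (monoSubgraph G (floodSeq G (ctrMoves s) ω)).Reachable none u := by
  induction s generalizing ω with
  | nil =>
    rcases h with h | h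
    · exact hw.trans ⟨.cons ⟨hadj, (reach_color hw).symm.trans h.symm⟩ .nil⟩
    · simp at h
  | cons d s ih =>
    by_cases hreach : (monoSubgraph G ω).Reachable none u
    · exact reach_ctrSeq (d :: s) hreach
    · have hune : ω u ≠ ω none := by
        intro he
        exact hreach (hw.trans ⟨.cons ⟨hadj, (reach_color hw).symm.trans he.symm⟩ .nil⟩)
      rcases h with h | h
      · exact absurd h hune
      rcases List.mem_cons.mp h with h | h
      · -- ω u = d : absorbed by the first move
        have : (monoSubgraph G (floodMove G ω none d)).Reachable none u :=
          reach_floodMove_absorb hw hadj h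
        exact reach_ctrSeq s this
      · refine ih (reach_floodMove hw) (Or.inr ?_)
        rw [floodMove_of_not_reach hreach]
        exact h

lemma ctrSeq_center (s : List (Fin c)) (ω : Option (Fin L × Fin r) → Fin c) :
    floodSeq G (ctrMoves s) ω none = s.getLastD (ω none) := by
  induction s generalizing ω with
  | nil => rfl
  | cons d s ih =>
    show floodSeq G (ctrMoves s) (floodMove G ω none d) none = _
    rw [ih, floodMove_self, List.getLastD_cons]

/-- all colours other than `x`, ending with `y`. -/
noncomputable def blockTo (x y : Fin c) : List (Fin c) := ((Finset.univ.erase y).erase x).toList ++ [y]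

lemma blockTo_length (hc : 2 ≤ c) {x y : Fin c} (hxy : x ≠ y) :
    (blockTo x y).length = c - 1 := by
  have hx : x ∈ Finset.univ.erase y := Finset.mem_erase.mpr ⟨hxy, Finset.mem_univ x⟩
  rw [blockTo, List.length_append, List.length_singleton, Finset.length_toList,
    Finset.card_erase_of_mem hx, Finset.card_erase_of_mem (Finset.mem_univ y)]
  simp only [Finset.card_univ, Fintype.card_fin]
  omega

lemma mem_blockTo {x y z : Fin c} (hz : z ≠ x) : z ∈ blockTo x y := by
  by_cases hzy : z = y
  · exact List.mem_append_right _ (by simp [hzy])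
  · exact List.mem_append_left _ (by
      rw [Finset.mem_toList]
      exact Finset.mem_erase.mpr ⟨hz, Finset.mem_erase.mpr ⟨hzy, Finset.mem_univ z⟩⟩)

lemma blockTo_getLastD (x y : Fin c) (a : Fin c) : (blockTo x y).getLastD a = y :=
  List.getLastD_concat

/-- `n` blocks of centre moves, alternating between "all but `x`, end `y`" and
"all but `y`, end `x`". -/
noncomputable def blockSeq (x y : Fin c) (n : ℕ) : List (Fin c) :=
  Nat.rec [] (fun n ih => ih ++ (if Even n then blockTo x y else blockTo y x)) n

lemma blockSeq_zero (x y : Fin c) : blockSeq x y 0 = [] := rfl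

lemma blockSeq_succ (x y : Fin c) (n : ℕ) :
    blockSeq x y (n + 1) = blockSeq x y n ++ (if Even n then blockTo x y else blockTo y x) := rfl

lemma blockSeq_length (hc : 2 ≤ c) {x y : Fin c} (hxy : x ≠ y) (n : ℕ) :
    (blockSeq x y n).length = n * (c - 1) := by
  induction n with
  | zero => simp [blockSeq_zero]
  | succ n ih =>
    rw [blockSeq_succ, List.length_append, ih]
    split
    · rw [blockTo_length hc hxy]; ring
    · rw [blockTo_length hc (Ne.symm hxy)]; ring

lemma spider_invariant (hc : 2 ≤ c) {ω : Option (Fin L × Fin r) → Fin c} {y : Fin c}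
    (hxy : ω none ≠ y) (n : ℕ) :
    (floodSeq (spider L r) (ctrMoves (blockSeq (ω none) y n)) ω) none
      = (if Even n then ω none else y) ∧
    ∀ (i : Fin L) (j : Fin r), (j : ℕ) + 1 ≤ n →
      (monoSubgraph (spider L r) (floodSeq (spider L r) (ctrMoves (blockSeq (ω none) y n)) ω)).Reachable
        none (some (i, j)) := by
  set x := ω none with hx
  induction n with
  | zero =>
    constructor
    · simp [blockSeq, ctrMoves, floodSeq, hx]
    · intro i j hj; omega
  | succ n ih =>
    obtain ⟨ihc, ihr⟩ := ih
    have hsplit : floodSeq (spider L r) (ctrMoves (blockSeq x y (n+1))) ω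
        = floodSeq (spider L r) (ctrMoves (if Even n then blockTo x y else blockTo y x))
            (floodSeq (spider L r) (ctrMoves (blockSeq x y n)) ω) := by
      rw [blockSeq_succ, ctrMoves, List.map_append, floodSeq_append]; rfl
    set ωn := floodSeq (spider L r) (ctrMoves (blockSeq x y n)) ω with hωn
    constructor
    · rw [hsplit, ctrSeq_center]
      by_cases he : Even n
      · rw [if_pos he, blockTo_getLastD, if_neg (by simp [Nat.even_add_one, he])]
      · rw [if_neg he, blockTo_getLastD, if_pos (by simp [Nat.even_add_one, he])]
    · intro i j hj
      rw [hsplit]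
      rcases Nat.lt_or_ge ((j : ℕ) + 1) (n + 1) with hlt | hge
      · exact reach_ctrSeq _ (ihr i j (by omega))
      · have hjn : (j : ℕ) = n := by omega
        -- parent of (i, j)
        have hpar : ∃ w, (monoSubgraph (spider L r) ωn).Reachable none w ∧
            (spider L r).Adj w (some (i, j)) := by
          rcases Nat.eq_zero_or_pos (j : ℕ) with h0 | hpos
          · exact ⟨none, Reachable.refl _, spider_adj_center i j h0⟩
          · refine ⟨some (i, ⟨(j : ℕ) - 1, by omega⟩),
              ihr i _ (by simp; omega), spider_adj_leg i _ _ (by simp; omega)⟩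
        obtain ⟨w, hw, hadj⟩ := hpar
        refine absorb_ctrSeq _ hw hadj ?_
        by_cases hcc : ωn (some (i, j)) = ωn none
        · exact Or.inl hcc
        · refine Or.inr ?_
          rw [ihc] at hcc
          by_cases he : Even n
          · rw [if_pos he]
            exact mem_blockTo (by rwa [if_pos he] at hcc)
          · rw [if_neg he]
            exact mem_blockTo (by rwa [if_neg he] at hcc)

/-- Upper bound: from any colouring, `(c-1)*r` centre moves connect everything. -/
lemma spider_upper (hc : 2 ≤ c) (ω : Option (Fin L × Fin r) → Fin c) :
    ∃ ms : List (Option (Fin L × Fin r) × Fin c), ms.length = (c - 1) * r ∧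
      ∀ v, (monoSubgraph (spider L r) (floodSeq (spider L r) ms ω)).Reachable none v := by
  have hy : ∃ y : Fin c, ω none ≠ y := by
    rcases Decidable.em (ω none = ⟨0, by omega⟩) with h | h
    · exact ⟨⟨1, by omega⟩, by rw [h]; simp [Fin.ext_iff]⟩
    · exact ⟨⟨0, by omega⟩, h⟩
  obtain ⟨y, hxy⟩ := hy
  obtain ⟨hcen, hreach⟩ := spider_invariant (L := L) (r := r) hc hxy r
  refine ⟨ctrMoves (blockSeq (ω none) y r), ?_, ?_⟩
  · rw [ctrMoves, List.length_map, blockSeq_length hc hxy]; ring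
  · rintro (_ | ⟨i, j⟩)
    · exact Reachable.refl _
    · exact hreach i j j.isLt

end Upper

section Psi
variable {L r : ℕ}

/-- Signed depth with respect to leg `i`. -/
def psi (i : Fin L) : Option (Fin L × Fin r) → ℤ
  | none => 0
  | some (i', k) => if i' = i then (k : ℤ) + 1 else -((k : ℤ) + 1)

lemma psi_step {i : Fin L} {x y : Option (Fin L × Fin r)} (h : (spider L r).Adj x y) :
    psi i x = psi i y + 1 ∨ psi i y = psi i x + 1 := by
  rw [spider, SimpleGraph.fromRel_adj] at h
  obtain ⟨-, h⟩ := h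
  rcases x with _ | ⟨i1, k1⟩ <;> rcases y with _ | ⟨i2, k2⟩ <;>
    simp only [psi] at *
  · rcases h with h | h <;> exact h.elim
  · rcases h with h | h
    · split_ifs <;> omega
    · exact h.elim
  · rcases h with h | h
    · exact h.elim
    · split_ifs <;> omega
  · rcases h with ⟨rfl, h⟩ | ⟨rfl, h⟩ <;> split_ifs <;> omega

lemma psi_walk_ivt {i : Fin L} {ω : Option (Fin L × Fin r) → Fin c'} {x y : Option (Fin L × Fin r)}
    (p : (monoSubgraph (spider L r) ω).Walk x y) (m : ℤ) (hx : psi i x ≤ m) (hy : m ≤ psi i y) :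
    ∃ z ∈ p.support, psi i z = m := by
  induction p with
  | nil => exact ⟨_, by simp, le_antisymm hx hy⟩
  | @cons a b z h q ih =>
    rcases eq_or_lt_of_le hx with he | hlt
    · exact ⟨a, by simp, he⟩
    · have hb : psi i b ≤ m := by
        rcases psi_step (i := i) h.1 with hs | hs <;> omega
      obtain ⟨w, hw, hwm⟩ := ih hb hy
      exact ⟨w, by simp [hw], hwm⟩

lemma psi_eq_zero {i : Fin L} {z : Option (Fin L × Fin r)} (h : psi i z = 0) : z = none := by
  rcases z with _ | ⟨i', k⟩
  · rfl
  · simp only [psi] at h; split_ifs at h <;> omega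

lemma psi_eq_succ {i : Fin L} {z : Option (Fin L × Fin r)} {n : ℕ} (h : psi i z = (n : ℤ) + 1) :
    ∃ k : Fin r, (k : ℕ) = n ∧ z = some (i, k) := by
  rcases z with _ | ⟨i', k⟩
  · simp only [psi] at h; omega
  · simp only [psi] at h
    split_ifs at h with hi
    · exact ⟨k, by omega, by rw [hi]⟩
    · omega

end Psi

section Step
variable {c' : ℕ} {L r : ℕ}

/-- If a move played outside leg `i` changes the colour of the `j`-th vertex of leg `i`,
then just before the move the centre and the whole initial segment of leg `i` up to `j`
had the colour of that vertex, and they all receive the move's colour. -/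
lemma flood_step_untouched {ω : Option (Fin L × Fin r) → Fin c'} {i : Fin L}
    {v : Option (Fin L × Fin r)} (hv : ∀ j' : Fin r, v ≠ some (i, j')) {dd : Fin c'} {j : Fin r}
    (hch : floodMove (spider L r) ω v dd (some (i, j)) ≠ ω (some (i, j))) :
    (∀ j' : Fin r, (j' : ℕ) ≤ (j : ℕ) →
      ω (some (i, j')) = ω (some (i, j)) ∧
      floodMove (spider L r) ω v dd (some (i, j')) = dd) ∧
    ω none = ω (some (i, j)) ∧ floodMove (spider L r) ω v dd none = dd ∧
    floodMove (spider L r) ω v dd (some (i, j)) = dd := by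
  have hreach : (monoSubgraph (spider L r) ω).Reachable v (some (i, j)) := by
    by_contra hnr
    exact hch (floodMove_of_not_reach hnr)
  obtain ⟨p⟩ := hreach
  have hpsiv : psi i v ≤ 0 := by
    rcases v with _ | ⟨i', k⟩
    · exact le_refl 0
    · have : i' ≠ i := fun h => hv k (by rw [h])
      simp only [psi, if_neg this]; omega
  have key : ∀ m : ℤ, 0 ≤ m → m ≤ (j : ℕ) + 1 → ∃ z,
      (monoSubgraph (spider L r) ω).Reachable v z ∧ psi i z = m ∧
      ω z = ω (some (i, j)) ∧ floodMove (spider L r) ω v dd z = dd := by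
    intro m hm0 hmj
    obtain ⟨z, hz, hzm⟩ := psi_walk_ivt p m (le_trans hpsiv hm0) (by simp [psi]; omega)
    have hvz : (monoSubgraph (spider L r) ω).Reachable v z := ⟨p.takeUntil z hz⟩
    refine ⟨z, hvz, hzm, ?_, floodMove_of_reach hvz⟩
    exact (reach_color (hvz.symm.trans ⟨p⟩))
  refine ⟨?_, ?_, ?_, floodMove_of_reach ⟨p⟩⟩
  · intro j' hj'
    obtain ⟨z, hvz, hzm, hcol, hfl⟩ := key ((j' : ℕ) + 1) (by omega) (by omega)
    obtain ⟨k, hk, rfl⟩ := psi_eq_succ hzm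
    have : k = j' := Fin.ext hk
    subst this
    exact ⟨hcol, hfl⟩
  · obtain ⟨z, hvz, hzm, hcol, hfl⟩ := key 0 le_rfl (by omega)
    rw [psi_eq_zero hzm] at hcol; exact hcol
  · obtain ⟨z, hvz, hzm, hcol, hfl⟩ := key 0 le_rfl (by omega)
    rw [psi_eq_zero hzm] at hfl; exact hfl

end Step

section Dyn
variable {c' L r : ℕ}

/-- colouring after `t` moves. -/
noncomputable def omt (ω0 : Option (Fin L × Fin r) → Fin c')
    (ms : List (Option (Fin L × Fin r) × Fin c')) (t : ℕ) : Option (Fin L × Fin r) → Fin c' :=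
  floodSeq (spider L r) (ms.take t) ω0

/-- colour of the `j`-th vertex of leg `i` after `t` moves. -/
noncomputable def colA (ω0 : Option (Fin L × Fin r) → Fin c')
    (ms : List (Option (Fin L × Fin r) × Fin c')) (i : Fin L) (d : Fin c') (t j : ℕ) : Fin c' :=
  if h : j < r then omt ω0 ms t (some (i, ⟨j, h⟩)) else d

/-- times at which the `j`-th vertex of leg `i` changes colour. -/
def chgSet (ω0 : Option (Fin L × Fin r) → Fin c')
    (ms : List (Option (Fin L × Fin r) × Fin c')) (i : Fin L) (d : Fin c') (j : ℕ) : Set ℕ :=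
  {t | colA ω0 ms i d (t + 1) j ≠ colA ω0 ms i d t j}

variable {ω0 : Option (Fin L × Fin r) → Fin c'} {ms : List (Option (Fin L × Fin r) × Fin c')}
  {i : Fin L} {d : Fin c'}

lemma omt_zero : omt ω0 ms 0 = ω0 := rfl

lemma omt_succ {t : ℕ} (h : t < ms.length) :
    omt ω0 ms (t + 1) = floodMove (spider L r) (omt ω0 ms t) ms[t].1 ms[t].2 := by
  unfold omt
  rw [List.take_succ, List.getElem?_eq_getElem h, Option.toList_some, floodSeq_append]
  rfl

lemma omt_ge {t : ℕ} (h : ms.length ≤ t) : omt ω0 ms t = omt ω0 ms ms.length := by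
  unfold omt
  rw [List.take_of_length_le h, List.take_length]

lemma chg_lt {j t : ℕ} (h : t ∈ chgSet ω0 ms i d j) : t < ms.length := by
  by_contra hc
  push_neg at hc
  have h1 : omt ω0 ms (t + 1) = omt ω0 ms t := by
    rw [omt_ge (le_trans hc (Nat.le_succ t)), omt_ge hc]
  exact h (by unfold colA; rw [h1])

lemma col_stable {j : ℕ} (T : ℕ) (h : ∀ s < T, s ∉ chgSet ω0 ms i d j) :
    colA ω0 ms i d T j = colA ω0 ms i d 0 j := by
  induction T with
  | zero => rfl
  | succ T ih =>
    have h1 : colA ω0 ms i d (T + 1) j = colA ω0 ms i d T j :=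
      not_not.mp (h T (Nat.lt_succ_self T))
    rw [h1]
    exact ih (fun s hs => h s (Nat.lt_succ_of_lt hs))

lemma chg_exists {j : ℕ} (T : ℕ) (h : colA ω0 ms i d T j ≠ colA ω0 ms i d 0 j) :
    ∃ s < T, s ∈ chgSet ω0 ms i d j := by
  induction T with
  | zero => exact absurd rfl h
  | succ T ih =>
    by_cases hT : T ∈ chgSet ω0 ms i d j
    · exact ⟨T, Nat.lt_succ_self T, hT⟩
    · have h1 : colA ω0 ms i d (T + 1) j = colA ω0 ms i d T j := not_not.mp hT
      obtain ⟨s, hs, hmem⟩ := ih (by rwa [h1] at h)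
      exact ⟨s, Nat.lt_succ_of_lt hs, hmem⟩

lemma chg_step (hunt : ∀ m ∈ ms, ∀ j' : Fin r, m.1 ≠ some (i, j'))
    {j : ℕ} (hj : j < r) {t : ℕ} (ht : t ∈ chgSet ω0 ms i d j) :
    omt ω0 ms t none = colA ω0 ms i d t j ∧
    ∀ j' ≤ j, colA ω0 ms i d t j' = colA ω0 ms i d t j := by
  have htl : t < ms.length := chg_lt ht
  have hch : floodMove (spider L r) (omt ω0 ms t) ms[t].1 ms[t].2 (some (i, ⟨j, hj⟩))
      ≠ omt ω0 ms t (some (i, ⟨j, hj⟩)) := by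
    intro he
    apply ht
    unfold colA
    rw [dif_pos hj, dif_pos hj, omt_succ htl, he]
  have hv : ∀ j' : Fin r, ms[t].1 ≠ some (i, j') :=
    hunt ms[t] (List.getElem_mem _) 
  obtain ⟨hseg, hcen, -, -⟩ := flood_step_untouched hv hch
  constructor
  · rw [hcen]; unfold colA; rw [dif_pos hj]
  · intro j' hj'
    have hj'r : j' < r := lt_of_le_of_lt hj' hj
    have := (hseg ⟨j', hj'r⟩ hj').1
    unfold colA
    rw [dif_pos hj'r, dif_pos hj, this]

lemma first_change (hunt : ∀ m ∈ ms, ∀ j' : Fin r, m.1 ≠ some (i, j'))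
    (hvv : ∀ j, j + 1 < r → colA ω0 ms i d 0 (j + 1) ≠ colA ω0 ms i d 0 j)
    {j : ℕ} (hj : j < r) (hne : (chgSet ω0 ms i d j).Nonempty) :
    sInf (chgSet ω0 ms i d j) < ms.length ∧
    omt ω0 ms (sInf (chgSet ω0 ms i d j)) none = colA ω0 ms i d 0 j ∧
    (1 ≤ j → (chgSet ω0 ms i d (j - 1)).Nonempty ∧
      sInf (chgSet ω0 ms i d (j - 1)) < sInf (chgSet ω0 ms i d j)) := by
  set tj := sInf (chgSet ω0 ms i d j) with htj
  have hmem : tj ∈ chgSet ω0 ms i d j := Nat.sInf_mem hne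
  have htl : tj < ms.length := chg_lt hmem
  have hstab : colA ω0 ms i d tj j = colA ω0 ms i d 0 j :=
    col_stable tj (fun s hs => Nat.notMem_of_lt_sInf hs)
  obtain ⟨hcen, hseg⟩ := chg_step hunt hj hmem
  refine ⟨htl, by rw [hcen, hstab], ?_⟩
  intro h1j
  have hj1 : j - 1 + 1 = j := by omega
  have hprev : colA ω0 ms i d tj (j - 1) = colA ω0 ms i d 0 j := by
    rw [hseg (j - 1) (by omega), hstab]
  have hne0 : colA ω0 ms i d 0 j ≠ colA ω0 ms i d 0 (j - 1) := by
    have := hvv (j - 1) (by omega)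
    rwa [hj1] at this
  obtain ⟨s, hs, hmem'⟩ := chg_exists tj (by rw [hprev]; exact hne0)
  exact ⟨⟨s, hmem'⟩, lt_of_le_of_lt (Nat.sInf_le hmem') hs⟩

lemma dyn (hr : 1 ≤ r)
    (hunt : ∀ m ∈ ms, ∀ j' : Fin r, m.1 ≠ some (i, j'))
    (hvv : ∀ j, j + 1 < r → colA ω0 ms i d 0 (j + 1) ≠ colA ω0 ms i d 0 j)
    (hfl : ∀ v, floodSeq (spider L r) ms ω0 v = d) :
    ∃ (k : ℕ) (t : ℕ → ℕ),
      ((colA ω0 ms i d 0 (r - 1) = d ∧ k + 1 = r) ∨ (colA ω0 ms i d 0 (r - 1) ≠ d ∧ k = r)) ∧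
      (∀ j, j + 1 < k → t j < t (j + 1)) ∧
      (∀ j < k, t j < ms.length ∧ omt ω0 ms (t j) none = colA ω0 ms i d 0 j) := by
  have hflcol : ∀ j, j < r → colA ω0 ms i d ms.length j = d := by
    intro j hj
    unfold colA
    rw [dif_pos hj]
    show floodSeq (spider L r) (ms.take ms.length) ω0 _ = d
    rw [List.take_length]
    exact hfl _
  -- choice of k and nonemptiness at the top level
  have htop : ∀ k : ℕ, ((colA ω0 ms i d 0 (r - 1) = d ∧ k + 1 = r) ∨
      (colA ω0 ms i d 0 (r - 1) ≠ d ∧ k = r)) → 1 ≤ k → (chgSet ω0 ms i d (k - 1)).Nonempty := by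
    rintro k (⟨hd, hk⟩ | ⟨hd, hk⟩) h1k
    · -- k = r - 1 ≥ 1, so r ≥ 2 ; use index r - 2
      have hr2 : 2 ≤ r := by omega
      have hkk : k - 1 = r - 2 := by omega
      have hvv' : colA ω0 ms i d 0 (r - 1) ≠ colA ω0 ms i d 0 (r - 2) := by
        have := hvv (r - 2) (by omega)
        rwa [show r - 2 + 1 = r - 1 by omega] at this
      obtain ⟨s, -, hmem⟩ := chg_exists (j := r - 2) ms.length
        (by rw [hflcol (r - 2) (by omega)]; rw [hd] at hvv'; exact hvv'.symm ∘ Eq.symm)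
      rw [hkk]
      exact ⟨s, hmem⟩
    · have hkk : k - 1 = r - 1 := by omega
      obtain ⟨s, -, hmem⟩ := chg_exists (j := r - 1) ms.length
        (by rw [hflcol (r - 1) (by omega)]; exact fun he => hd he.symm)
      rw [hkk]
      exact ⟨s, hmem⟩
  obtain ⟨k, hkspec⟩ : ∃ k : ℕ, (colA ω0 ms i d 0 (r - 1) = d ∧ k + 1 = r) ∨
      (colA ω0 ms i d 0 (r - 1) ≠ d ∧ k = r) := by
    by_cases hd : colA ω0 ms i d 0 (r - 1) = d
    · exact ⟨r - 1, Or.inl ⟨hd, by omega⟩⟩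
    · exact ⟨r, Or.inr ⟨hd, rfl⟩⟩
  have hkr : k ≤ r := by rcases hkspec with ⟨-, h⟩ | ⟨-, h⟩ <;> omega
  -- downward propagation of nonemptiness
  have hdown : ∀ n, ∀ j, j + n + 1 = k → (chgSet ω0 ms i d j).Nonempty := by
    intro n
    induction n with
    | zero =>
      intro j hjk
      have : j = k - 1 := by omega
      subst this
      exact htop k hkspec (by omega)
    | succ n ih =>
      intro j hjk
      have hne1 : (chgSet ω0 ms i d (j + 1)).Nonempty := ih (j + 1) (by omega)
      have := (first_change hunt hvv (by omega : j + 1 < r) hne1).2.2 (by omega)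
      have h2 : j + 1 - 1 = j := by omega
      rw [h2] at this
      exact this.1
  have hne : ∀ j < k, (chgSet ω0 ms i d j).Nonempty := by
    intro j hjk
    exact hdown (k - 1 - j) j (by omega)
  refine ⟨k, fun j => sInf (chgSet ω0 ms i d j), hkspec, ?_, ?_⟩
  · intro j hjk
    have := (first_change hunt hvv (by omega : j + 1 < r) (hne (j + 1) (by omega))).2.2 (by omega)
    have h2 : j + 1 - 1 = j := by omega
    rw [h2] at this
    exact this.2
  · intro j hjk
    obtain ⟨h1, h2, -⟩ := first_change hunt hvv (by omega : j < r) (hne j hjk)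
    exact ⟨h1, h2⟩

end Dyn
section Count
variable {c : ℕ}

/-- an element of `s` maximising `f`, or `h0` if `s` is empty -/
noncomputable def pick (s : Finset (Fin c)) (f : Fin c → ℕ) (h0 : Fin c) : Fin c :=
  if h : s.Nonempty then (Finset.exists_max_image s f h).choose else h0

lemma pick_mem {s : Finset (Fin c)} {f : Fin c → ℕ} {h0 : Fin c} (h : s.Nonempty) :
    pick s f h0 ∈ s := by
  rw [pick, dif_pos h]
  exact (Finset.exists_max_image s f h).choose_spec.1

lemma pick_max {s : Finset (Fin c)} {f : Fin c → ℕ} {h0 : Fin c} (h : s.Nonempty) :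
    ∀ b ∈ s, f b ≤ f (pick s f h0) := by
  rw [pick, dif_pos h]
  exact (Finset.exists_max_image s f h).choose_spec.2

/-- first position after `p` (capped at `ℓ`) where `σ` takes value `b` -/
noncomputable def nxt (σ : ℕ → Fin c) (ℓ p : ℕ) (b : Fin c) : ℕ :=
  sInf {t | p < t ∧ (ℓ ≤ t ∨ σ t = b)}

lemma nxt_nonempty (σ : ℕ → Fin c) (ℓ p : ℕ) (b : Fin c) :
    {t | p < t ∧ (ℓ ≤ t ∨ σ t = b)}.Nonempty :=
  ⟨ℓ + p + 1, by constructor <;> omega⟩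

lemma nxt_mem (σ : ℕ → Fin c) (ℓ p : ℕ) (b : Fin c) :
    p < nxt σ ℓ p b ∧ (ℓ ≤ nxt σ ℓ p b ∨ σ (nxt σ ℓ p b) = b) :=
  Nat.sInf_mem (nxt_nonempty σ ℓ p b)

lemma nxt_pos (σ : ℕ → Fin c) (ℓ p : ℕ) (b : Fin c) : p < nxt σ ℓ p b :=
  (nxt_mem σ ℓ p b).1

lemma nxt_val {σ : ℕ → Fin c} {ℓ p : ℕ} {b : Fin c} (h : nxt σ ℓ p b < ℓ) :
    σ (nxt σ ℓ p b) = b := by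
  rcases (nxt_mem σ ℓ p b).2 with h' | h'
  · omega
  · exact h'

lemma nxt_le {σ : ℕ → Fin c} {ℓ p : ℕ} {b : Fin c} {t : ℕ} (h1 : p < t) (h2 : σ t = b) :
    nxt σ ℓ p b ≤ t :=
  Nat.sInf_le ⟨h1, Or.inr h2⟩

/-- counting: if `q < ℓ` and the first occurrence after `p` of each colour in `S`
is at most `q`, then `q - p ≥ |S|`. -/
lemma nxt_count {σ : ℕ → Fin c} {ℓ p q : ℕ} {S : Finset (Fin c)} (hSne : S.Nonempty)
    (hq : q < ℓ) (hS : ∀ b ∈ S, nxt σ ℓ p b ≤ q) : p + S.card ≤ q := by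
  have hinj : Set.InjOn (fun b => nxt σ ℓ p b) S := by
    intro b1 hb1 b2 hb2 he
    have h1 : nxt σ ℓ p b1 < ℓ := lt_of_le_of_lt (hS b1 hb1) hq
    have h2 : nxt σ ℓ p b2 < ℓ := lt_of_le_of_lt (hS b2 hb2) hq
    have he' : nxt σ ℓ p b1 = nxt σ ℓ p b2 := he
    rw [← nxt_val h1, ← nxt_val h2, he']
  have hmap : ∀ b ∈ S, nxt σ ℓ p b ∈ Finset.Ioc p q := by
    intro b hb
    exact Finset.mem_Ioc.mpr ⟨nxt_pos σ ℓ p b, hS b hb⟩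
  have hcard := Finset.card_le_card_of_injOn _ hmap hinj
  rw [Nat.card_Ioc] at hcard
  obtain ⟨b, hb⟩ := hSne
  have := lt_of_lt_of_le (nxt_pos σ ℓ p b) (hS b hb)
  omega

/-- greedy positions/colours: `gp n = (bₙ, pₙ)` where `b₀ = σ 0`, `p₀ = 0` and `b_{n+1}`
is the colour `≠ bₙ` whose first occurrence after `pₙ` is latest, occurring at `p_{n+1}`. -/
noncomputable def gp (σ : ℕ → Fin c) (ℓ : ℕ) : ℕ → Fin c × ℕ :=
  fun n => Nat.rec (σ 0, 0) (fun _ ih =>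
    (pick (Finset.univ.erase ih.1) (nxt σ ℓ ih.2) (σ 0),
      nxt σ ℓ ih.2 (pick (Finset.univ.erase ih.1) (nxt σ ℓ ih.2) (σ 0)))) n

lemma gp_zero (σ : ℕ → Fin c) (ℓ : ℕ) : gp σ ℓ 0 = (σ 0, 0) := rfl

lemma gp_succ (σ : ℕ → Fin c) (ℓ : ℕ) (n : ℕ) :
    gp σ ℓ (n + 1) =
      (pick (Finset.univ.erase (gp σ ℓ n).1) (nxt σ ℓ (gp σ ℓ n).2) (σ 0),
        nxt σ ℓ (gp σ ℓ n).2
          (pick (Finset.univ.erase (gp σ ℓ n).1) (nxt σ ℓ (gp σ ℓ n).2) (σ 0))) := rfl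

lemma erase_nonempty (hc : 2 ≤ c) (x : Fin c) : (Finset.univ.erase x).Nonempty := by
  apply Finset.card_pos.mp
  rw [Finset.card_erase_of_mem (Finset.mem_univ x), Finset.card_univ, Fintype.card_fin]
  omega

lemma gp_mem (hc : 2 ≤ c) (σ : ℕ → Fin c) (ℓ n : ℕ) :
    (gp σ ℓ (n + 1)).1 ≠ (gp σ ℓ n).1 := by
  rw [gp_succ]
  exact Finset.ne_of_mem_erase (pick_mem (erase_nonempty hc _))

lemma gp_lt (σ : ℕ → Fin c) (ℓ n : ℕ) : (gp σ ℓ n).2 < (gp σ ℓ (n + 1)).2 := by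
  rw [gp_succ]
  exact nxt_pos σ ℓ _ _

lemma gp_max (σ : ℕ → Fin c) (ℓ n : ℕ) (hc : 2 ≤ c) :
    ∀ b, b ≠ (gp σ ℓ n).1 → nxt σ ℓ (gp σ ℓ n).2 b ≤ (gp σ ℓ (n + 1)).2 := by
  intro b hb
  rw [gp_succ]
  exact pick_max (erase_nonempty hc _) b (Finset.mem_erase.mpr ⟨hb, Finset.mem_univ b⟩)

lemma gp_growth (hc : 2 ≤ c) (σ : ℕ → Fin c) (ℓ n : ℕ) (h : (gp σ ℓ (n + 1)).2 < ℓ) :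
    (gp σ ℓ n).2 + (c - 1) ≤ (gp σ ℓ (n + 1)).2 := by
  have hcard : (Finset.univ.erase (gp σ ℓ n).1).card = c - 1 := by
    rw [Finset.card_erase_of_mem (Finset.mem_univ _), Finset.card_univ, Fintype.card_fin]
  have := nxt_count (σ := σ) (ℓ := ℓ) (p := (gp σ ℓ n).2) (q := (gp σ ℓ (n + 1)).2)
    (erase_nonempty hc _) h
    (fun b hb => gp_max σ ℓ n hc b (Finset.mem_erase.mp hb).1)
  rw [hcard] at this
  exact this

lemma gp_lb (hc : 2 ≤ c) (σ : ℕ → Fin c) (ℓ : ℕ) :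
    ∀ n, (gp σ ℓ n).2 < ℓ → (c - 1) * n ≤ (gp σ ℓ n).2 := by
  intro n
  induction n with
  | zero => intro _; simp [gp_zero]
  | succ n ih =>
    intro h
    have h1 : (gp σ ℓ n).2 < ℓ := lt_trans (gp_lt σ ℓ n) h
    have h2 := gp_growth hc σ ℓ n h
    have h3 := ih h1
    have : (c - 1) * (n + 1) = (c - 1) * n + (c - 1) := by ring
    omega

/-- The counting lemma: if a trajectory `σ` admits, for every admissible word `a`, an
embedding as described, then `ℓ ≥ (c-1)r`. -/
lemma count (hc : 2 ≤ c) {r ℓ : ℕ} (hr : 1 ≤ r) (σ : ℕ → Fin c) (d : Fin c)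
    (hend : σ ℓ = d)
    (H : ∀ a : ℕ → Fin c, a 0 ≠ σ 0 → (∀ j, j + 1 < r → a (j + 1) ≠ a j) →
      ∃ (k : ℕ) (t : ℕ → ℕ),
        ((a (r - 1) = d ∧ k + 1 = r) ∨ (a (r - 1) ≠ d ∧ k = r)) ∧
        (∀ j, j + 1 < k → t j < t (j + 1)) ∧
        (∀ j < k, t j < ℓ ∧ σ (t j) = a j)) :
    (c - 1) * r ≤ ℓ := by
  set prev := gp σ ℓ (r - 1) with hprev
  set s' : Finset (Fin c) := (Finset.univ.erase prev.1).erase d with hs'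
  set lp : Fin c := if h : s'.Nonempty then pick s' (nxt σ ℓ prev.2) (σ 0) else d with hlp
  -- the greedy word
  set a : ℕ → Fin c := fun j => if j + 2 ≤ r then (gp σ ℓ (j + 1)).1 else lp with ha
  have hlp_ne_prev : lp ≠ prev.1 := by
    rw [hlp]
    split_ifs with h
    · have := pick_mem (f := nxt σ ℓ prev.2) (h0 := σ 0) h
      rw [hs'] at this
      exact (Finset.mem_erase.mp (Finset.mem_erase.mp this).2).1
    · -- s' empty: univ.erase prev.1 ⊆ {d}, so c = 2 and d ≠ prev.1
      intro hd
      rw [Finset.not_nonempty_iff_eq_empty, hs'] at h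
      have := erase_nonempty hc prev.1
      obtain ⟨b, hb⟩ := this
      have hbd : b = d := by
        by_contra hbd
        exact Finset.notMem_empty b (h ▸ Finset.mem_erase.mpr ⟨hbd, hb⟩)
      rw [hbd] at hb
      exact (Finset.mem_erase.mp hb).1 hd
  have ha_pre : ∀ j, j + 2 ≤ r → a j = (gp σ ℓ (j + 1)).1 := by
    intro j hj; rw [ha]; simp only [if_pos hj]
  have ha_last : a (r - 1) = lp := by
    rw [ha]; simp only []
    rw [if_neg (by omega)]
  have hvalid0 : a 0 ≠ σ 0 := by
    by_cases h2 : 2 ≤ r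
    · rw [ha_pre 0 h2]
      have := gp_mem hc σ ℓ 0
      rwa [gp_zero] at this
    · have hr1 : r = 1 := by omega
      have : a 0 = lp := by rw [ha]; simp only []; rw [if_neg (by omega)]
      rw [this]
      have : prev.1 = σ 0 := by rw [hprev, hr1]; rfl
      rw [← this]
      exact hlp_ne_prev
  have hvalidc : ∀ j, j + 1 < r → a (j + 1) ≠ a j := by
    intro j hj
    rw [ha_pre j (by omega)]
    by_cases h3 : j + 3 ≤ r
    · rw [ha_pre (j + 1) h3]
      exact gp_mem hc σ ℓ (j + 1)
    · have hj2 : j + 2 = r := by omega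
      have : a (j + 1) = lp := by rw [ha]; simp only []; rw [if_neg (by omega)]
      rw [this]
      have : prev = gp σ ℓ (j + 1) := by rw [hprev]; congr 1; omega
      rw [← this]
      exact hlp_ne_prev
  obtain ⟨k, t, hk, hmono, hjs⟩ := H a hvalid0 hvalidc
  -- embedding is bounded below by the greedy positions
  have hE : ∀ j, j < k → j + 2 ≤ r → (gp σ ℓ (j + 1)).2 ≤ t j := by
    intro j
    induction j with
    | zero =>
      intro hk0 hr2
      obtain ⟨ht0, hσ0⟩ := hjs 0 hk0
      have h01 : σ (t 0) = (gp σ ℓ 1).1 := by rw [hσ0, ha_pre 0 hr2]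
      have hpos : 0 < t 0 := by
        rcases Nat.eq_zero_or_pos (t 0) with h0 | h0
        · exfalso; apply hvalid0; rw [← hσ0, h0]
        · exact h0
      have : (gp σ ℓ 1).2 ≤ t 0 := by
        rw [gp_succ, gp_zero]
        exact nxt_le hpos h01
      exact this
    | succ j ih =>
      intro hk1 hr2
      have h1 : (gp σ ℓ (j + 1)).2 ≤ t j := ih (by omega) (by omega)
      have h2 : t j < t (j + 1) := hmono j (by omega)
      obtain ⟨ht1, hσ1⟩ := hjs (j + 1) hk1
      have h3 : σ (t (j + 1)) = (gp σ ℓ (j + 2)).1 := by rw [hσ1, ha_pre (j + 1) hr2]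
      have : (gp σ ℓ (j + 2)).2 ≤ t (j + 1) := by
        rw [gp_succ]
        exact nxt_le (by omega) (by rw [h3]; rfl)
      exact this
  by_cases hA : s'.Nonempty
  · -- last letter avoids d : k = r
    have hlpd : lp ≠ d := by
      rw [hlp, dif_pos hA]
      exact Finset.ne_of_mem_erase (pick_mem hA)
    have hkr : k = r := by
      rcases hk with ⟨hd, -⟩ | ⟨-, h⟩
      · rw [ha_last] at hd; exact absurd hd hlpd
      · exact h
    obtain ⟨htr, hσr⟩ := hjs (r - 1) (by omega)
    have hlast : prev.2 < t (r - 1) := by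
      by_cases h2 : 2 ≤ r
      · have h4 := hE (r - 2) (by omega) (by omega)
        have h5 : r - 2 + 1 = r - 1 := by omega
        rw [h5] at h4
        have h6 := hmono (r - 2) (by omega)
        rw [h5] at h6
        rw [hprev]
        omega
      · have hr1 : r = 1 := by omega
        have hr0 : r - 1 = 0 := by omega
        rw [hr0] at hσr
        have hpos : 0 < t (r - 1) := by
          rcases Nat.eq_zero_or_pos (t (r - 1)) with h0 | h0
          · exfalso
            apply hvalid0
            rw [hr0] at h0
            rw [← hσr, h0]
          · exact h0
        have : prev.2 = 0 := by rw [hprev, hr1]; rfl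
        omega
    have hq : nxt σ ℓ prev.2 lp ≤ t (r - 1) := by
      apply nxt_le hlast
      rw [hσr, ha_last]
    have hcount : prev.2 + s'.card ≤ t (r - 1) :=
      nxt_count (σ := σ) (ℓ := ℓ) (p := prev.2) hA htr (fun b hb => by
        have hle : nxt σ ℓ prev.2 b ≤ nxt σ ℓ prev.2 lp := by
          rw [hlp, dif_pos hA]
          exact pick_max hA b hb
        omega)
    have hcard : c - 2 ≤ s'.card := by
      rw [hs']
      have h1 := Finset.card_erase_of_mem (Finset.mem_univ prev.1)
      rcases Decidable.em (d ∈ Finset.univ.erase prev.1) with hd | hd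
      · rw [Finset.card_erase_of_mem hd, h1, Finset.card_univ, Fintype.card_fin]; omega
      · rw [Finset.erase_eq_of_notMem hd, h1, Finset.card_univ, Fintype.card_fin]; omega
    have hplb : (c - 1) * (r - 1) ≤ prev.2 := by
      rw [hprev]
      exact gp_lb hc σ ℓ (r - 1) (by rw [← hprev]; omega)
    have hsplit : (c - 1) * r = (c - 1) * (r - 1) + (c - 1) := by
      obtain ⟨r', rfl⟩ : ∃ r', r = r' + 1 := ⟨r - 1, by omega⟩
      simp [Nat.mul_succ]
    omega
  · -- s' empty : c = 2 and the last letter is d, k = r - 1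
    have hc2 : c = 2 := by
      rw [Finset.not_nonempty_iff_eq_empty, hs'] at hA
      by_contra hc3
      have hc3' : 3 ≤ c := by omega
      -- univ.erase prev.1 has ≥ 2 elements, so some element ≠ d
      have hcard : 2 ≤ (Finset.univ.erase prev.1).card := by
        rw [Finset.card_erase_of_mem (Finset.mem_univ _), Finset.card_univ, Fintype.card_fin]
        omega
      obtain ⟨b, hb, hbd⟩ : ∃ b ∈ Finset.univ.erase prev.1, b ≠ d := by
        by_contra hno
        push_neg at hno
        have : Finset.univ.erase prev.1 ⊆ {d} := fun b hb => Finset.mem_singleton.mpr (hno b hb)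
        have := Finset.card_le_card this
        rw [Finset.card_singleton] at this
        omega
      exact Finset.notMem_empty b (hA ▸ Finset.mem_erase.mpr ⟨hbd, hb⟩)
    have hlpd : lp = d := by rw [hlp, dif_neg hA]
    have hkr : k + 1 = r := by
      rcases hk with ⟨-, h⟩ | ⟨hd, -⟩
      · exact h
      · rw [ha_last, hlpd] at hd; exact absurd rfl hd
    by_cases h2 : 2 ≤ r
    · -- embed up to r - 2
      obtain ⟨htr, hσr⟩ := hjs (r - 2) (by omega)
      have h4 := hE (r - 2) (by omega) (by omega)
      have h5 : r - 2 + 1 = r - 1 := by omega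
      rw [h5] at h4
      have hplb : (c - 1) * (r - 1) ≤ (gp σ ℓ (r - 1)).2 :=
        gp_lb hc σ ℓ (r - 1) (by omega)
      have e1 : (c - 1) * (r - 1) = r - 1 := by rw [hc2]; omega
      have e2 : (c - 1) * r = r := by rw [hc2]; omega
      omega
    · -- r = 1, k = 0 : need ℓ ≥ 1
      have hr1 : r = 1 := by omega
      have e2 : (c - 1) * r = 1 := by rw [hc2, hr1]
      rcases Nat.eq_zero_or_pos ℓ with h0 | h0
      · exfalso
        -- ℓ = 0 : d = σ 0, but then s' = univ.erase prev.1 is nonempty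
        have hd0 : d = σ 0 := by rw [← hend, h0]
        have hp0 : prev.1 = σ 0 := by rw [hprev, hr1]; rfl
        apply hA
        rw [hs', hd0, ← hp0]
        rw [Finset.erase_idem]
        exact erase_nonempty hc prev.1
      · omega

end Count

section Words
variable {c : ℕ}

def decode (b : Fin c) (k : Fin (c - 1)) : Fin c :=
  if (k : ℕ) < (b : ℕ) then ⟨k, by omega⟩ else ⟨(k : ℕ) + 1, by have := k.isLt; omega⟩

lemma decode_ne (b : Fin c) (k : Fin (c - 1)) : decode b k ≠ b := by
  unfold decode
  split_ifs with h <;> (intro he; rw [Fin.ext_iff] at he; simp at he; omega)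

def encode (hc : 2 ≤ c) (b a : Fin c) : Fin (c - 1) :=
  if h : (a : ℕ) < (b : ℕ) then ⟨a, by have := b.isLt; omega⟩
  else ⟨(a : ℕ) - 1, by have := a.isLt; omega⟩

lemma decode_encode (hc : 2 ≤ c) (b a : Fin c) (h : a ≠ b) : decode b (encode hc b a) = a := by
  have hab : (a : ℕ) ≠ (b : ℕ) := fun he => h (Fin.ext he)
  unfold decode encode
  split_ifs with h1 h2 h3 <;> rw [Fin.ext_iff] <;> simp_all <;> omega

/-- The word over `Fin c` obtained from a difference-encoding `E`, starting after `x0`. -/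
def wordFun (x0 : Fin c) (E : ℕ → Fin (c - 1)) (n : ℕ) : Fin c :=
  Nat.rec (decode x0 (E 0)) (fun m ih => decode ih (E (m + 1))) n

lemma wordFun_zero (x0 : Fin c) (E : ℕ → Fin (c - 1)) : wordFun x0 E 0 = decode x0 (E 0) := rfl

lemma wordFun_succ (x0 : Fin c) (E : ℕ → Fin (c - 1)) (n : ℕ) :
    wordFun x0 E (n + 1) = decode (wordFun x0 E n) (E (n + 1)) := rfl

lemma wordFun_valid0 (x0 : Fin c) (E : ℕ → Fin (c - 1)) : wordFun x0 E 0 ≠ x0 := decode_ne _ _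

lemma wordFun_validc (x0 : Fin c) (E : ℕ → Fin (c - 1)) (n : ℕ) :
    wordFun x0 E (n + 1) ≠ wordFun x0 E n := decode_ne _ _

lemma wordFun_congr (x0 : Fin c) (E1 E2 : ℕ → Fin (c - 1)) (j : ℕ)
    (h : ∀ n ≤ j, E1 n = E2 n) : wordFun x0 E1 j = wordFun x0 E2 j := by
  induction j with
  | zero => rw [wordFun_zero, wordFun_zero, h 0 le_rfl]
  | succ j ih =>
    rw [wordFun_succ, wordFun_succ, h (j + 1) le_rfl,
      ih (fun n hn => h n (le_trans hn (Nat.le_succ j)))]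

lemma wordFun_surj (hc : 2 ≤ c) (x0 : Fin c) (r : ℕ) (a : ℕ → Fin c) (h0 : a 0 ≠ x0)
    (hcons : ∀ j, j + 1 < r → a (j + 1) ≠ a j) :
    ∃ E : ℕ → Fin (c - 1), ∀ j < r, wordFun x0 E j = a j := by
  refine ⟨fun n => if n = 0 then encode hc x0 (a 0)
    else if n < r then encode hc (a (n - 1)) (a n) else encode hc x0 (a 0), ?_⟩
  intro j hj
  induction j with
  | zero => rw [wordFun_zero]; simp only [if_pos rfl]; exact decode_encode hc x0 (a 0) h0
  | succ j ih =>
    rw [wordFun_succ, ih (by omega)]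
    simp only [Nat.succ_ne_zero, if_neg, if_pos hj, Nat.add_sub_cancel]
    exact decode_encode hc (a j) (a (j + 1)) (hcons j hj)

end Words

section LowerSetup
variable {c r : ℕ}

/-- extension of a `Fin r`-indexed encoding to `ℕ` -/
def extE (hr : 1 ≤ r) (E : Fin r → Fin (c - 1)) : ℕ → Fin (c - 1) :=
  fun n => E ⟨n % r, Nat.mod_lt n (by omega)⟩

lemma extE_eq (hr : 1 ≤ r) (E : Fin r → Fin (c - 1)) {n : ℕ} (hn : n < r) :
    extE hr E n = E ⟨n, hn⟩ := by
  unfold extE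
  congr 1
  exact Fin.ext (Nat.mod_eq_of_lt hn)

end LowerSetup

section Assembly
variable {c r : ℕ}

noncomputable def legEquiv (c r : ℕ) :
    ((Fin r → Fin (c - 1)) × Fin ((r + 1) * (c - 1))) ≃ Fin ((r + 1) * (c - 1) ^ (r + 1)) :=
  Fintype.equivOfCardEq (by
    simp only [Fintype.card_prod, Fintype.card_fun, Fintype.card_fin]
    rw [pow_succ]; ring)

/-- The adversarial colouring: centre gets colour `0`; leg `i` is coloured according to
the word encoded by the first component of `legEquiv.symm i`. -/
noncomputable def omega0 (hc : 2 ≤ c) (hr : 1 ≤ r) :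
    Option (Fin ((r + 1) * (c - 1) ^ (r + 1)) × Fin r) → Fin c :=
  fun v => match v with
  | none => ⟨0, by omega⟩
  | some (i, j) => wordFun ⟨0, by omega⟩ (extE hr ((legEquiv c r).symm i).1) j

lemma omega0_surj (hc : 2 ≤ c) (hr : 1 ≤ r) : Function.Surjective (omega0 hc hr) := by
  intro b
  set x0 : Fin c := ⟨0, by omega⟩ with hx0
  by_cases hb : b = x0
  · exact ⟨none, hb.symm⟩
  · refine ⟨some (legEquiv c r (fun _ => encode hc x0 b,
      ⟨0, Nat.mul_pos (by omega) (by omega)⟩), ⟨0, by omega⟩), ?_⟩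
    show wordFun x0 (extE hr ((legEquiv c r).symm (legEquiv c r (fun _ => encode hc x0 b,
      ⟨0, Nat.mul_pos (by omega) (by omega)⟩))).1) (⟨0, by omega⟩ : Fin r) = b
    rw [Equiv.symm_apply_apply]
    rw [wordFun_zero, extE_eq hr _ (by omega : (0:ℕ) < r)]
    exact decode_encode hc x0 b hb

lemma spider_lower (hc : 2 ≤ c) (hr : 1 ≤ r) (d : Fin c)
    (ms : List (Option (Fin ((r + 1) * (c - 1) ^ (r + 1)) × Fin r) × Fin c))
    (hfl : ∀ v, floodSeq (spider ((r + 1) * (c - 1) ^ (r + 1)) r) ms (omega0 hc hr) v = d) :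
    (c - 1) * r ≤ ms.length := by
  by_cases hlen : (c - 1) * r ≤ ms.length
  · exact hlen
  push_neg at hlen
  set x0 : Fin c := ⟨0, by omega⟩ with hx0
  set ω0 := omega0 (r := r) hc hr with hω0
  refine count hc hr (fun t => omt ω0 ms t none) d ?_ ?_
  · show floodSeq _ (ms.take ms.length) ω0 none = d
    rw [List.take_length]; exact hfl none
  · intro a h0 hcons
    have h0' : a 0 ≠ x0 := h0
    obtain ⟨E, hE⟩ := wordFun_surj hc x0 r a h0' hcons
    set eF : Fin r → Fin (c - 1) := fun j => E j with heF
    -- find an untouched copy of the word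
    set T := (ms.filterMap (fun m => m.1.map Prod.fst)).toFinset with hT
    have hTcard : T.card ≤ ms.length :=
      le_trans (List.toFinset_card_le _) (List.length_filterMap_le _ _)
    have hinj : Function.Injective
        (fun k : Fin ((r + 1) * (c - 1)) => legEquiv c r (eF, k)) := by
      intro k1 k2 h
      have := (legEquiv c r).injective h
      rw [Prod.mk.injEq] at this
      exact this.2
    set copies := Finset.univ.image (fun k : Fin ((r + 1) * (c - 1)) => legEquiv c r (eF, k))
      with hcop
    have hcopcard : copies.card = (r + 1) * (c - 1) := by
      rw [hcop, Finset.card_image_of_injective _ hinj, Finset.card_univ, Fintype.card_fin]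
    have hmul : (c - 1) * r ≤ (r + 1) * (c - 1) := by
      rw [mul_comm]
      exact Nat.mul_le_mul_right _ (by omega)
    have hnotsub : ¬ copies ⊆ T := by
      intro hsub
      have := Finset.card_le_card hsub
      omega
    rw [Finset.not_subset] at hnotsub
    obtain ⟨i, hicop, hiT⟩ := hnotsub
    rw [hcop, Finset.mem_image] at hicop
    obtain ⟨k, -, rfl⟩ := hicop
    set i := legEquiv c r (eF, k) with hi
    have hunt : ∀ m ∈ ms, ∀ j' : Fin r, m.1 ≠ some (i, j') := by
      intro m hm j' he
      exact hiT (List.mem_toFinset.mpr (List.mem_filterMap.mpr ⟨m, hm, by rw [he]; rfl⟩))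
    have hword : ∀ j, (hj : j < r) → colA ω0 ms i d 0 j = a j := by
      intro j hj
      unfold colA
      rw [dif_pos hj]
      show ω0 (some (i, ⟨j, hj⟩)) = a j
      rw [hω0]
      show wordFun x0 (extE hr ((legEquiv c r).symm i).1) j = a j
      rw [hi, Equiv.symm_apply_apply]
      rw [wordFun_congr x0 _ E j (fun n hn => by
        rw [extE_eq hr _ (lt_of_le_of_lt hn hj)])]
      exact hE j hj
    have hvv : ∀ j, j + 1 < r → colA ω0 ms i d 0 (j + 1) ≠ colA ω0 ms i d 0 j := by
      intro j hj
      rw [hword (j + 1) hj, hword j (by omega)]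
      exact hcons j hj
    obtain ⟨k', t, hkdisj, hmono, hjs⟩ := dyn hr hunt hvv hfl
    have hk'r : k' ≤ r := by rcases hkdisj with ⟨-, h⟩ | ⟨-, h⟩ <;> omega
    refine ⟨k', t, ?_, hmono, ?_⟩
    · rwa [hword (r - 1) (by omega)] at hkdisj
    · intro j hj
      obtain ⟨h1, h2⟩ := hjs j hj
      refine ⟨h1, ?_⟩
      show omt ω0 ms (t j) none = a j
      rw [h2, hword j (by omega)]

end Assembly

/-- For `c ≥ 2` and `r ≥ 1`, the tree `T_{c,r}`, consisting of `(r+1)(c-1)^(r+1)` paths on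
`r + 1` vertices sharing a common first vertex (a spider with `(r+1)(c-1)^(r+1)` legs of
length `r`), satisfies `M_c(T_{c,r}) = (c - 1) * r`. -/
theorem maxFloodCost_spider (c r : ℕ) (hc : 2 ≤ c) (hr : 1 ≤ r) :
    maxFloodCost c (spider ((r + 1) * (c - 1) ^ (r + 1)) r) = (c - 1) * r := by
  set L := (r + 1) * (c - 1) ^ (r + 1) with hL
  set G := spider L r with hG
  -- upper bound for every colouring
  have hupper : ∀ ω : Option (Fin L × Fin r) → Fin c, floodCostMin G ω ≤ (c - 1) * r := by
    intro ω
    obtain ⟨ms, hlen, hreach⟩ := spider_upper hc ω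
    have hfl : ∀ v, floodSeq G ms ω v = floodSeq G ms ω none :=
      fun v => (reach_color (hreach v)).symm
    have h1 : floodCost G ω (floodSeq G ms ω none) ≤ (c - 1) * r :=
      Nat.sInf_le ⟨ms, hlen, hfl⟩
    exact le_trans (Nat.sInf_le ⟨_, rfl⟩) h1
  -- every target colour is reachable
  have hfeas : ∀ (ω : Option (Fin L × Fin r) → Fin c) (d : Fin c),
      {k | ∃ ms : List (Option (Fin L × Fin r) × Fin c), ms.length = k ∧
        ∀ v, floodSeq G ms ω v = d}.Nonempty := by
    intro ω d
    obtain ⟨ms, hlen, hreach⟩ := spider_upper hc ω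
    refine ⟨(ms ++ [(none, d)]).length, ms ++ [(none, d)], rfl, ?_⟩
    intro v
    rw [floodSeq_append]
    show floodMove G (floodSeq G ms ω) none d v = d
    exact floodMove_of_reach (hreach v)
  -- lower bound for the adversarial colouring
  have hlower : (c - 1) * r ≤ floodCostMin G (omega0 hc hr) := by
    refine le_csInf ⟨floodCost G (omega0 hc hr) ⟨0, by omega⟩, ⟨⟨0, by omega⟩, rfl⟩⟩ ?_
    rintro k ⟨d, rfl⟩
    obtain ⟨ms, hlen, hfl⟩ := Nat.sInf_mem (hfeas (omega0 hc hr) d)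
    rw [floodCost, ← hlen]
    exact spider_lower hc hr d ms hfl
  have heq : floodCostMin G (omega0 hc hr) = (c - 1) * r :=
    le_antisymm (hupper _) hlower
  apply le_antisymm
  · refine csSup_le ⟨(c - 1) * r, ⟨omega0 hc hr, omega0_surj hc hr, heq⟩⟩ ?_
    rintro k ⟨ω, -, rfl⟩
    exact hupper ω
  · exact le_csSup ⟨(c - 1) * r, by rintro k ⟨ω, -, rfl⟩; exact hupper ω⟩
      ⟨omega0 hc hr, omega0_surj hc hr, heq⟩
end

section
/- Let P be a path on n vertices and let ω be an r-shifted C-rainbow colouring of P, for some colour-set C with |C| = c ≥ 2 and some r ∈ {0,…,n−1}. Then m(P,ω) ≥ n − ⌈n/c⌉. -/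
open Classical SimpleGraph

/-- `ω` is an `r`-shifted `C`-rainbow colouring of the path `v₁ … vₙ` (here indexed by
`Fin n`, with `v_i` corresponding to index `i - 1`): there is a bijective indexing
`e : ZMod c → C` of the `c` colours (combining the indexing `d` of `C` with the
permutation `π`) such that `ω(v_i) = e((i - r) mod c)` for all `1 ≤ i ≤ n`.
A `C`-rainbow colouring is a `0`-shifted `C`-rainbow colouring. -/
def IsShiftedRainbow {C : Type*} (c r : ℕ) {n : ℕ} (ω : Fin n → C) : Prop :=
  ∃ e : ZMod c → C, Function.Bijective e ∧
    ∀ i : Fin n, ω i = e ((((i : ℕ) + 1 : ℕ) : ZMod c) - ((r : ℕ) : ZMod c))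

namespace FloodLB

variable {C : Type*}

/-- The 4-way laminar relation between integer pairs (gaps). -/
def LamRel (p q : ℕ × ℕ) : Prop :=
  p.2 ≤ q.1 ∨ q.2 ≤ p.1 ∨ (p.1 < q.1 ∧ q.2 < p.2) ∨ (q.1 < p.1 ∧ p.2 < q.2)

lemma LamRel.symm {p q : ℕ × ℕ} (h : LamRel p q) : LamRel q p := by
  unfold LamRel at *; omega

/-- The set of "colour boundaries" of `f` below `n`. -/
noncomputable def bset (n : ℕ) (f : ℕ → C) : Finset ℕ :=
  (Finset.range n).filter fun i => i + 1 < n ∧ f i ≠ f (i + 1)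

noncomputable def Dn (n : ℕ) (f : ℕ → C) : ℕ := (bset n f).card

/-- A good family of linked pairs for colouring `f` on `[0,n)`. -/
structure IsGood (n : ℕ) (f : ℕ → C) (M : Finset (ℕ × ℕ)) : Prop where
  lt : ∀ p ∈ M, p.1 < p.2
  ub : ∀ p ∈ M, p.2 < n
  mono : ∀ p ∈ M, f p.1 = f p.2
  sep : ∀ p ∈ M, ∀ q ∈ M, ∀ x y : ℕ, (x = p.1 ∨ x = p.2) → (y = q.1 ∨ y = q.2) →
      x < y → ∃ z, x ≤ z ∧ z ≤ y ∧ f z ≠ f x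
  lam : ∀ p ∈ M, ∀ q ∈ M, p ≠ q → LamRel p q

/-- ranges of pairs -/
noncomputable def rng (M : Finset (ℕ × ℕ)) : Finset ℕ :=
  M.biUnion fun p => Finset.Ioc p.1 p.2

lemma dvd_le_of_dvd_lt {a s m : ℕ} (ha : 0 < a) (hs : a ∣ s) (hm : a ∣ m) (h : s < m) :
    s + a ≤ m := by
  have h1 : a ∣ m - s := Nat.dvd_sub hm hs
  have h2 : a ≤ m - s := Nat.le_of_dvd (by omega) h1
  omega

section Laminar

variable {c : ℕ}

/-- union of a laminar family of c-divisible gaps has c-divisible size,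
and has size at least c * card. -/
lemma laminar_card (hc : 0 < c) :
    ∀ k : ℕ, ∀ M : Finset (ℕ × ℕ), M.card = k →
      (∀ p ∈ M, p.1 < p.2) → (∀ p ∈ M, c ∣ p.2 - p.1) →
      (∀ p ∈ M, ∀ q ∈ M, p ≠ q → LamRel p q) →
      c ∣ (rng M).card ∧ c * M.card ≤ (rng M).card := by
  intro k
  induction k using Nat.strong_induction_on with
  | _ k IH =>
    intro M hcard hlt hdvd hlam
    rcases Finset.eq_empty_or_nonempty M with rfl | hne
    · simp [rng]
    obtain ⟨p, hpM, hpmax⟩ := Finset.exists_max_image M (fun q => q.2 - q.1) hne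
    set Sin := M.filter (fun q => p.1 < q.1 ∧ q.2 < p.2) with hSin
    set Sout := M.filter (fun q => q.2 ≤ p.1 ∨ p.2 ≤ q.1) with hSout
    have hpSin : p ∉ Sin := by
      simp only [hSin, Finset.mem_filter]
      omega
    have hpSout : p ∉ Sout := by
      simp only [hSout, Finset.mem_filter]
      have := hlt p hpM; omega
    have hclass : ∀ q ∈ M, q ≠ p → (q ∈ Sin ∨ q ∈ Sout) := by
      intro q hqM hqp
      have h4 := hlam q hqM p hpM hqp
      have hmax := hpmax q hqM
      have hq := hlt q hqM
      have hp := hlt p hpM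
      unfold LamRel at h4
      simp only [hSin, hSout, Finset.mem_filter]
      rcases h4 with h | h | h | h
      · right; exact ⟨hqM, Or.inl h⟩
      · right; exact ⟨hqM, Or.inr h⟩
      · omega
      · left; exact ⟨hqM, h⟩
    have hdisj : Disjoint Sin Sout := by
      rw [Finset.disjoint_left]
      intro q hq1 hq2
      simp only [hSin, Finset.mem_filter] at hq1
      simp only [hSout, Finset.mem_filter] at hq2
      obtain ⟨hqM, h1, h2⟩ := hq1
      have := hlt q hqM
      omega
    have hMeq : M = insert p (Sin ∪ Sout) := by
      apply Finset.ext
      intro q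
      simp only [Finset.mem_insert, Finset.mem_union]
      constructor
      · intro hq
        by_cases hqp : q = p
        · left; exact hqp
        · rcases hclass q hq hqp with h | h
          · right; left; exact h
          · right; right; exact h
      · rintro (rfl | h | h)
        · exact hpM
        · exact (Finset.mem_filter.mp h).1
        · exact (Finset.mem_filter.mp h).1
    have hpnotin : p ∉ Sin ∪ Sout := by
      simp only [Finset.mem_union]; tauto
    have hcard2 : M.card = 1 + Sin.card + Sout.card := by
      rw [hMeq, Finset.card_insert_of_notMem hpnotin, Finset.card_union_of_disjoint hdisj]
      omega
    have hSinsub : Sin ⊆ M := Finset.filter_subset _ _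
    have hSoutsub : Sout ⊆ M := Finset.filter_subset _ _
    have hSincard : Sin.card < k := by
      have : Sin.card ≤ M.card := Finset.card_le_card hSinsub
      omega
    have hSoutcard : Sout.card < k := by
      have : Sout.card ≤ M.card := Finset.card_le_card hSoutsub
      omega
    have IHin := IH Sin.card hSincard Sin rfl
      (fun q hq => hlt q (hSinsub hq)) (fun q hq => hdvd q (hSinsub hq))
      (fun q hq q' hq' => hlam q (hSinsub hq) q' (hSinsub hq'))
    have IHout := IH Sout.card hSoutcard Sout rfl
      (fun q hq => hlt q (hSoutsub hq)) (fun q hq => hdvd q (hSoutsub hq))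
      (fun q hq q' hq' => hlam q (hSoutsub hq) q' (hSoutsub hq'))
    -- rng M = Ioc p.1 p.2 ∪ rng Sout, disjointly
    have hrngeq : rng M = Finset.Ioc p.1 p.2 ∪ rng Sout := by
      apply Finset.ext
      intro z
      simp only [rng, Finset.mem_biUnion, Finset.mem_union, Finset.mem_Ioc]
      constructor
      · rintro ⟨q, hqM, hz⟩
        by_cases hqp : q = p
        · subst hqp; left; exact hz
        · rcases hclass q hqM hqp with h | h
          · simp only [hSin, Finset.mem_filter] at h
            left; omega
          · right; exact ⟨q, h, hz⟩
      · rintro (h | ⟨q, hq, hz⟩)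
        · exact ⟨p, hpM, h⟩
        · exact ⟨q, hSoutsub hq, hz⟩
    have hrngdisj : Disjoint (Finset.Ioc p.1 p.2) (rng Sout) := by
      rw [Finset.disjoint_left]
      intro z hz1 hz2
      simp only [Finset.mem_Ioc] at hz1
      simp only [rng, Finset.mem_biUnion, Finset.mem_Ioc] at hz2
      obtain ⟨q, hq, hz⟩ := hz2
      simp only [hSout, Finset.mem_filter] at hq
      omega
    have hrngcard : (rng M).card = (p.2 - p.1) + (rng Sout).card := by
      rw [hrngeq, Finset.card_union_of_disjoint hrngdisj, Nat.card_Ioc]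
    -- rng Sin is inside Ioc p.1 p.2 minus p.1+1
    have hrngin : rng Sin ⊆ (Finset.Ioc p.1 p.2).erase (p.1 + 1) := by
      intro z hz
      simp only [rng, Finset.mem_biUnion, Finset.mem_Ioc] at hz
      obtain ⟨q, hq, hz⟩ := hz
      simp only [hSin, Finset.mem_filter] at hq
      simp only [Finset.mem_erase, Finset.mem_Ioc]
      omega
    have hrngincard : (rng Sin).card ≤ p.2 - p.1 - 1 := by
      have := Finset.card_le_card hrngin
      rwa [Finset.card_erase_of_mem (by simp only [Finset.mem_Ioc]; have := hlt p hpM; omega),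
        Nat.card_Ioc] at this
    have hdvdp := hdvd p hpM
    have hltp := hlt p hpM
    constructor
    · rw [hrngcard]
      exact Nat.dvd_add hdvdp IHout.1
    · rw [hrngcard, hcard2]
      have h1 : c + (rng Sin).card ≤ p.2 - p.1 := by
        rcases Nat.eq_zero_or_pos (rng Sin).card with h0 | hpos
        · rw [h0]; have : c ∣ p.2 - p.1 := hdvdp
          have : c ≤ p.2 - p.1 := Nat.le_of_dvd (by omega) hdvdp
          omega
        · have := dvd_le_of_dvd_lt hc IHin.1 hdvdp (by omega)
          omega
      have h2 := IHin.2
      have h3 := IHout.2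
      calc c * (1 + Sin.card + Sout.card)
          = c + c * Sin.card + c * Sout.card := by ring
        _ ≤ c + (rng Sin).card + (rng Sout).card := by omega
        _ ≤ (p.2 - p.1) + (rng Sout).card := by omega

/-- Gap-counting lemma: laminar families of c-divisible gaps within [0,n) have few members. -/
lemma gap_count (hc : 0 < c) {n : ℕ} (M : Finset (ℕ × ℕ))
    (hlt : ∀ p ∈ M, p.1 < p.2) (hub : ∀ p ∈ M, p.2 < n)
    (hdvd : ∀ p ∈ M, c ∣ p.2 - p.1)
    (hlam : ∀ p ∈ M, ∀ q ∈ M, p ≠ q → LamRel p q) :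
    M.card ≤ (n - 1) / c := by
  have h := (laminar_card hc M.card M rfl hlt hdvd hlam).2
  have hsub : rng M ⊆ Finset.Ioc 0 (n - 1) := by
    intro z hz
    simp only [rng, Finset.mem_biUnion, Finset.mem_Ioc] at hz ⊢
    obtain ⟨q, hq, hz⟩ := hz
    have := hub q hq
    omega
  have := Finset.card_le_card hsub
  rw [Nat.card_Ioc] at this
  rw [Nat.le_div_iff_mul_le hc]
  calc M.card * c = c * M.card := by ring
    _ ≤ (rng M).card := h
    _ ≤ n - 1 - 0 := this
    _ ≤ n - 1 := by omega

end Laminar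


/-! ### Move context -/

def InK (ℓ r z : ℕ) : Prop := ℓ ≤ z ∧ z ≤ r

def Kh (n : ℕ) (g : ℕ → C) (ℓ : ℕ) (b : C) (z : ℕ) : Prop :=
  z < n ∧ ∀ w, min z ℓ ≤ w → w ≤ max z ℓ → g w = b

structure MoveCtx (n : ℕ) (f g : ℕ → C) (ℓ r : ℕ) (b : C) : Prop where
  hlr : ℓ ≤ r
  hrn : r < n
  hmono : ∀ z, ℓ ≤ z → z ≤ r → f z = f ℓ
  hmaxL : ℓ = 0 ∨ f (ℓ - 1) ≠ f ℓ
  hmaxR : r + 1 = n ∨ f (r + 1) ≠ f ℓ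
  hb : b ≠ f ℓ
  hg : ∀ z, g z = if ℓ ≤ z ∧ z ≤ r then b else f z

namespace MoveCtx

variable {n : ℕ} {f g : ℕ → C} {ℓ r : ℕ} {b : C}

lemma gK (mc : MoveCtx n f g ℓ r b) {z : ℕ} (h : InK ℓ r z) : g z = b := by
  rw [mc.hg]; simp [h.1, h.2]

lemma fg_out (mc : MoveCtx n f g ℓ r b) {z : ℕ} (h : ¬ InK ℓ r z) : g z = f z := by
  rw [mc.hg]; unfold InK at h; split_ifs with h' <;> tauto

lemma kh_of_inK (mc : MoveCtx n f g ℓ r b) {z : ℕ} (h : InK ℓ r z) :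
    Kh n g ℓ b z := by
  obtain ⟨h1, h2⟩ := h
  refine ⟨by have := mc.hrn; omega, fun w hw1 hw2 => ?_⟩
  exact mc.gK ⟨by omega, by omega⟩

lemma kh_l (mc : MoveCtx n f g ℓ r b) : Kh n g ℓ b ℓ :=
  mc.kh_of_inK ⟨le_refl _, mc.hlr⟩

lemma kh_lt_n {z : ℕ} (h : Kh n g ℓ b z) : z < n := h.1

lemma kh_colour {z : ℕ} (h : Kh n g ℓ b z) : g z = b :=
  h.2 z (by omega) (by omega)

lemma kh_interval {z1 z2 z3 : ℕ} (h1 : Kh n g ℓ b z1) (h3 : Kh n g ℓ b z3)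
    (h12 : z1 ≤ z2) (h23 : z2 ≤ z3) : Kh n g ℓ b z2 := by
  refine ⟨by have := h3.1; omega, fun w hw1 hw2 => ?_⟩
  rcases le_or_gt w ℓ with hw | hw
  · exact h1.2 w (by omega) (by omega)
  · exact h3.2 w (by omega) (by omega)

lemma kh_left_eL (mc : MoveCtx n f g ℓ r b) {z : ℕ} (h : Kh n g ℓ b z) (hz : z < ℓ) :
    0 < ℓ ∧ f (ℓ - 1) = b := by
  have h1 : g (ℓ - 1) = b := h.2 (ℓ - 1) (by omega) (by omega)
  have h2 : ¬ InK ℓ r (ℓ - 1) := by unfold InK; omega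
  rw [mc.fg_out h2] at h1
  exact ⟨by omega, h1⟩

lemma kh_right_eR (mc : MoveCtx n f g ℓ r b) {z : ℕ} (h : Kh n g ℓ b z) (hz : r < z) :
    r + 1 < n ∧ f (r + 1) = b := by
  have hl := mc.kh_l
  have hmid : Kh n g ℓ b (r + 1) := kh_interval hl h (by have := mc.hlr; omega) (by omega)
  have h1 : g (r + 1) = b := kh_colour hmid
  have h2 : ¬ InK ℓ r (r + 1) := by unfold InK; omega
  rw [mc.fg_out h2] at h1
  exact ⟨hmid.1, h1⟩

lemma eL_kh (mc : MoveCtx n f g ℓ r b) (h1 : 0 < ℓ) (h2 : f (ℓ - 1) = b) :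
    Kh n g ℓ b (ℓ - 1) := by
  have hlr := mc.hlr
  refine ⟨by have := mc.hrn; omega, fun w hw1 hw2 => ?_⟩
  rcases le_or_gt ℓ w with hw | hw
  · exact mc.gK ⟨hw, by omega⟩
  · have hwe : w = ℓ - 1 := by omega
    rw [hwe, mc.fg_out (by unfold InK; omega)]
    exact h2

lemma eR_kh (mc : MoveCtx n f g ℓ r b) (h1 : r + 1 < n) (h2 : f (r + 1) = b) :
    Kh n g ℓ b (r + 1) := by
  refine ⟨h1, fun w hw1 hw2 => ?_⟩
  rcases le_or_gt w r with hw | hw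
  · exact mc.gK ⟨by omega, hw⟩
  · have hwe : w = r + 1 := by have := mc.hlr; omega
    rw [hwe, mc.fg_out (by unfold InK; omega)]
    exact h2

lemma side {a z1 z2 : ℕ} (ha : ¬ Kh n g ℓ b a) (h1 : Kh n g ℓ b z1)
    (h2 : Kh n g ℓ b z2) : (a < z1 ∧ a < z2) ∨ (z1 < a ∧ z2 < a) := by
  have hne1 : a ≠ z1 := fun h => ha (h ▸ h1)
  have hne2 : a ≠ z2 := fun h => ha (h ▸ h2)
  rcases lt_or_gt_of_ne hne1 with h | h
  · left
    refine ⟨h, ?_⟩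
    by_contra hcon
    exact ha (kh_interval h2 h1 (by omega) (by omega))
  · right
    refine ⟨h, ?_⟩
    by_contra hcon
    exact ha (kh_interval h1 h2 (by omega) (by omega))

lemma notK_of_notKh (mc : MoveCtx n f g ℓ r b) {z : ℕ} (h : ¬ Kh n g ℓ b z) :
    ¬ InK ℓ r z := fun h' => h (mc.kh_of_inK h')

lemma notK_of_khL (mc : MoveCtx n f g ℓ r b) {z : ℕ} (hz : z < ℓ) : ¬ InK ℓ r z := by
  unfold InK; omega

lemma transfer (mc : MoveCtx n f g ℓ r b) {x y : ℕ} (hxy : x < y)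
    (hx : ¬ InK ℓ r x) (hy : ¬ InK ℓ r y)
    (h : ∃ z, x ≤ z ∧ z ≤ y ∧ g z ≠ g x) : ∃ z, x ≤ z ∧ z ≤ y ∧ f z ≠ f x := by
  by_contra hcon
  push_neg at hcon
  obtain ⟨z0, hz1, hz2, hz3⟩ := h
  have hfx : g x = f x := mc.fg_out hx
  by_cases hz0 : InK ℓ r z0
  · -- z0 in K
    have hfz0 : f z0 = f ℓ := mc.hmono z0 hz0.1 hz0.2
    have hfz0x : f z0 = f x := hcon z0 hz1 hz2
    -- x < ℓ
    have hxl : x < ℓ := by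
      rcases (by unfold InK at hx; omega : x < ℓ ∨ r < x) with h' | h'
      · exact h'
      · unfold InK at hz0; omega
    have hl0 : 0 < ℓ := by omega
    have hl1 : f (ℓ - 1) ≠ f ℓ := by
      rcases mc.hmaxL with h' | h'
      · omega
      · exact h'
    have : f (ℓ - 1) = f x := hcon (ℓ - 1) (by omega) (by unfold InK at hz0; omega)
    rw [this, hfz0x.symm, hfz0] at hl1
    exact hl1 rfl
  · have : g z0 = f z0 := mc.fg_out hz0
    rw [this, hcon z0 hz1 hz2, ← hfx] at hz3
    exact hz3 rfl

lemma b1 (mc : MoveCtx n f g ℓ r b) {x y : ℕ} (hx : ¬ Kh n g ℓ b x) (hxn : x < n)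
    (hy : Kh n g ℓ b y) (hxy : x < y) : ∃ z, x ≤ z ∧ z ≤ y ∧ g z ≠ g x := by
  by_cases hgx : g x = b
  · have hxl : x ≤ ℓ := by
      by_contra h'
      exact hx (kh_interval mc.kh_l hy (by omega) (by omega))
    have := hx
    unfold Kh at this
    push_neg at this
    obtain ⟨w, hw1, hw2, hw3⟩ := this hxn
    rcases le_or_gt w y with hwy | hwy
    · exact ⟨w, by omega, hwy, by rw [hgx]; exact hw3⟩
    · -- w > y: impossible region check: y < ℓ case
      exfalso
      have hyl : y ≤ ℓ ∨ ℓ ≤ y := le_total _ _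
      have hwl : w ≤ ℓ := by omega
      rcases le_or_gt ℓ y with h' | h'
      · omega
      · -- y < ℓ, w in (y, ℓ]
        exact hw3 (kh_colour (kh_interval hy mc.kh_l (by omega) (by omega)))
  · exact ⟨y, by omega, le_refl _, by rw [kh_colour hy]; exact fun h => hgx h.symm⟩

lemma b2 (mc : MoveCtx n f g ℓ r b) {x y : ℕ} (hx : Kh n g ℓ b x) (hy : ¬ Kh n g ℓ b y)
    (hyn : y < n) (hxy : x < y) : ∃ z, x ≤ z ∧ z ≤ y ∧ g z ≠ g x := by
  rw [kh_colour hx]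
  by_cases hgy : g y = b
  · have hly : ℓ ≤ y := by
      by_contra h'
      exact hy (kh_interval hx mc.kh_l (by omega) (by omega))
    have := hy
    unfold Kh at this
    push_neg at this
    obtain ⟨w, hw1, hw2, hw3⟩ := this hyn
    have hwl : ℓ ≤ w := by omega
    have hwx : x < w := by
      by_contra h'
      rcases le_or_gt w x with h'' | h''
      · rcases le_or_gt ℓ x with h3 | h3
        · exact hw3 (kh_colour (kh_interval mc.kh_l hx (by omega) (by omega)))
        · omega
      · omega
    exact ⟨w, by omega, by omega, hw3⟩
  · exact ⟨y, by omega, le_refl _, hgy⟩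

lemma strad (mc : MoveCtx n f g ℓ r b) {x y : ℕ} (hx : Kh n g ℓ b x) (hxl : x < ℓ)
    (hy : Kh n g ℓ b y) (hyr : r < y) : ∃ z, x ≤ z ∧ z ≤ y ∧ f z ≠ f x := by
  have hfx : f x = b := by
    have := kh_colour hx
    rwa [mc.fg_out (by unfold InK; omega)] at this
  refine ⟨ℓ, by omega, by have := mc.hlr; omega, ?_⟩
  rw [hfx]
  exact fun h => mc.hb h.symm

end MoveCtx

/-! ### Chains -/

noncomputable def chainOf (A : Finset ℕ) : Finset (ℕ × ℕ) :=
  (A ×ˢ A).filter fun p => p.1 < p.2 ∧ ∀ z ∈ A, ¬(p.1 < z ∧ z < p.2)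

lemma chainOf_mem {A : Finset ℕ} {p : ℕ × ℕ} :
    p ∈ chainOf A ↔ p.1 ∈ A ∧ p.2 ∈ A ∧ p.1 < p.2 ∧ ∀ z ∈ A, ¬(p.1 < z ∧ z < p.2) := by
  unfold chainOf
  simp only [Finset.mem_filter, Finset.mem_product]
  tauto

lemma chainOf_lam {A : Finset ℕ} {p q : ℕ × ℕ} (hp : p ∈ chainOf A) (hq : q ∈ chainOf A)
    (hne : p ≠ q) : LamRel p q := by
  rw [chainOf_mem] at hp hq
  obtain ⟨hp1, hp2, hplt, hpc⟩ := hp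
  obtain ⟨hq1, hq2, hqlt, hqc⟩ := hq
  rcases lt_trichotomy p.2 q.2 with h | h | h
  · -- p.2 ≤ q.1
    have := hqc p.2 hp2
    left; omega
  · -- same snd ⇒ same fst
    exfalso
    rcases lt_trichotomy p.1 q.1 with h' | h' | h'
    · exact hpc q.1 hq1 (by omega)
    · exact hne (Prod.ext h' h)
    · exact hqc p.1 hp1 (by omega)
  · have := hpc q.2 hq2
    right; left; omega

lemma chainOf_card {A : Finset ℕ} (hA : A.Nonempty) :
    (chainOf A).card = A.card - 1 := by
  have h1 : (chainOf A).card = (A.erase (A.min' hA)).card := by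
    apply Finset.card_bij (fun p _ => p.2)
    · intro p hp
      rw [chainOf_mem] at hp
      refine Finset.mem_erase.mpr ⟨?_, hp.2.1⟩
      intro hmin
      have := A.min'_le p.1 hp.1
      omega
    · intro p hp q hq hpq
      rw [chainOf_mem] at hp hq
      rcases lt_trichotomy p.1 q.1 with h' | h' | h'
      · exact absurd (by omega : p.1 < q.1 ∧ q.1 < p.2) (by have := hp.2.2.2 q.1 hq.1; tauto)
      · exact Prod.ext h' hpq
      · exact absurd (by omega : q.1 < p.1 ∧ p.1 < q.2) (by have := hq.2.2.2 p.1 hp.1; tauto)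
    · intro y hy
      rw [Finset.mem_erase] at hy
      have hmin : A.min' hA < y := by
        have h1 := A.min'_le y hy.2
        have := hy.1
        omega
      set B := A.filter (· < y) with hB
      have hBne : B.Nonempty := ⟨A.min' hA, by
        simp only [hB, Finset.mem_filter]
        exact ⟨A.min'_mem hA, hmin⟩⟩
      refine ⟨(B.max' hBne, y), ?_, rfl⟩
      rw [chainOf_mem]
      have hmem : B.max' hBne ∈ B := B.max'_mem hBne
      simp only [hB, Finset.mem_filter] at hmem
      refine ⟨hmem.1, hy.2, hmem.2, ?_⟩
      intro z hz hcon
      have : z ∈ B := by simp only [hB, Finset.mem_filter]; exact ⟨hz, by omega⟩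
      have := B.le_max' z this
      omega
  rw [h1, Finset.card_erase_of_mem (A.min'_mem hA)]

lemma chainOf_empty : chainOf (∅ : Finset ℕ) = ∅ := by
  unfold chainOf
  simp

namespace MoveCtx

variable {n : ℕ} {f g : ℕ → C} {ℓ r : ℕ} {b : C} {M' : Finset (ℕ × ℕ)}

lemma cmpKK (mc : MoveCtx n f g ℓ r b) {a1 a2 x y : ℕ}
    (h1 : ¬ Kh n g ℓ b a1) (h2 : ¬ Kh n g ℓ b a2) (ha : a1 < a2)
    (hx : Kh n g ℓ b x) (hy : Kh n g ℓ b y) (hxy : x < y) :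
    LamRel (x, y) (a1, a2) := by
  have s1 := side h1 hx hy
  have s2 := side h2 hx hy
  unfold LamRel
  simp only
  omega

lemma cmp1 (mc : MoveCtx n f g ℓ r b) (hM : IsGood n g M') {P R : ℕ × ℕ}
    (hP : P ∈ M') (hR : R ∈ M') (hne : P ≠ R) (hKP : Kh n g ℓ b P.2)
    (hR1 : ¬ Kh n g ℓ b R.1) (hR2 : ¬ Kh n g ℓ b R.2)
    {y : ℕ} (hy : Kh n g ℓ b y) (hxy : P.1 < y) : LamRel (P.1, y) R := by
  have hlam := hM.lam P hP R hR hne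
  have hltR := hM.lt R hR
  have hltP := hM.lt P hP
  have s1 := side hR1 hKP hy
  have s2 := side hR2 hKP hy
  unfold LamRel at hlam ⊢
  simp only at hlam ⊢
  omega

lemma cmp2 (mc : MoveCtx n f g ℓ r b) (hM : IsGood n g M') {Q R : ℕ × ℕ}
    (hQ : Q ∈ M') (hR : R ∈ M') (hne : Q ≠ R) (hKQ : Kh n g ℓ b Q.1)
    (hR1 : ¬ Kh n g ℓ b R.1) (hR2 : ¬ Kh n g ℓ b R.2)
    {x : ℕ} (hx : Kh n g ℓ b x) (hxy : x < Q.2) : LamRel (x, Q.2) R := by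
  have hlam := hM.lam Q hQ R hR hne
  have hltR := hM.lt R hR
  have hltQ := hM.lt Q hQ
  have s1 := side hR1 hKQ hx
  have s2 := side hR2 hKQ hx
  unfold LamRel at hlam ⊢
  simp only at hlam ⊢
  omega

lemma cmp3 (mc : MoveCtx n f g ℓ r b) (hM : IsGood n g M') {P Q R : ℕ × ℕ}
    (hP : P ∈ M') (hQ : Q ∈ M') (hR : R ∈ M') (hneP : P ≠ R) (hneQ : Q ≠ R)
    (hKP : Kh n g ℓ b P.2) (hKQ : Kh n g ℓ b Q.1)
    (hR1 : ¬ Kh n g ℓ b R.1) (hR2 : ¬ Kh n g ℓ b R.2)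
    (hP1 : ¬ Kh n g ℓ b P.1) (hQ2 : ¬ Kh n g ℓ b Q.2)
    (hxy : P.1 < Q.2) : LamRel (P.1, Q.2) R := by
  have hlamP := hM.lam P hP R hR hneP
  have hlamQ := hM.lam Q hQ R hR hneQ
  have hltR := hM.lt R hR
  have hltP := hM.lt P hP
  have hltQ := hM.lt Q hQ
  have s1 := side hR1 hKP hKQ
  have s2 := side hR2 hKP hKQ
  have s3 := side hP1 hKP hKQ
  have s4 := side hQ2 hKP hKQ
  unfold LamRel at hlamP hlamQ ⊢
  simp only at hlamP hlamQ ⊢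
  omega

end MoveCtx

namespace MoveCtx

variable {n : ℕ} {f g : ℕ → C} {ℓ r : ℕ} {b : C}

lemma stepD (mc : MoveCtx n f g ℓ r b) :
    Dn n f ≤ Dn n g + ((if 0 < ℓ ∧ f (ℓ - 1) = b then 1 else 0) +
      (if r + 1 < n ∧ f (r + 1) = b then 1 else 0)) := by
  classical
  set T : Finset ℕ := (if 0 < ℓ ∧ f (ℓ - 1) = b then ({ℓ - 1} : Finset ℕ) else ∅) ∪
    (if r + 1 < n ∧ f (r + 1) = b then ({r} : Finset ℕ) else ∅) with hT
  have hsub : bset n f ⊆ bset n g ∪ T := by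
    intro i hi
    unfold bset at hi
    rw [Finset.mem_filter, Finset.mem_range] at hi
    obtain ⟨hin, hin2, hne⟩ := hi
    by_cases hgi : g i = g (i + 1)
    · -- must be one of the special boundaries
      rw [Finset.mem_union]
      right
      rw [mc.hg i, mc.hg (i+1)] at hgi
      rw [hT, Finset.mem_union]
      by_cases h1 : ℓ ≤ i ∧ i ≤ r <;> by_cases h2 : ℓ ≤ i + 1 ∧ i + 1 ≤ r
      · exfalso
        have := mc.hmono i h1.1 h1.2
        have := mc.hmono (i+1) h2.1 h2.2
        exact hne (by rw [‹f i = f ℓ›, ‹f (i+1) = f ℓ›])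
      · -- i = r
        right
        have hir : i = r := by omega
        simp only [if_pos h1, if_neg h2] at hgi
        rw [if_pos, Finset.mem_singleton]
        · exact hir
        · exact ⟨by omega, by rw [show r + 1 = i + 1 by omega]; exact hgi.symm⟩
      · -- i = ℓ - 1
        left
        have hil : i + 1 = ℓ := by omega
        rw [if_pos, Finset.mem_singleton]
        · omega
        · refine ⟨by omega, ?_⟩
          simp only [if_neg h1, if_pos h2] at hgi
          rw [show ℓ - 1 = i by omega]
          exact hgi
      · exfalso
        simp only [if_neg h1, if_neg h2] at hgi
        exact hne hgi
    · rw [Finset.mem_union]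
      left
      unfold bset
      rw [Finset.mem_filter, Finset.mem_range]
      exact ⟨hin, hin2, hgi⟩
  have hTcard : T.card ≤ (if 0 < ℓ ∧ f (ℓ - 1) = b then 1 else 0) +
      (if r + 1 < n ∧ f (r + 1) = b then 1 else 0) := by
    rw [hT]
    refine le_trans (Finset.card_union_le _ _) ?_
    gcongr <;> split_ifs <;> simp
  calc Dn n f ≤ (bset n g ∪ T).card := Finset.card_le_card hsub
    _ ≤ Dn n g + T.card := Finset.card_union_le _ _
    _ ≤ _ := by omega

end MoveCtx

namespace MoveCtx

variable {n : ℕ} {f g : ℕ → C} {ℓ r : ℕ} {b : C}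

theorem stepM (mc : MoveCtx n f g ℓ r b) {M' : Finset (ℕ × ℕ)} (hM : IsGood n g M') :
    ∃ M : Finset (ℕ × ℕ), IsGood n f M ∧
      M'.card + ((if 0 < ℓ ∧ f (ℓ - 1) = b then 1 else 0) +
        (if r + 1 < n ∧ f (r + 1) = b then 1 else 0)) ≤ M.card + 1 := by
  classical
  set Sf := M'.filter (fun P => Kh n g ℓ b P.2) with hSf
  set Ts := M'.filter (fun P => Kh n g ℓ b P.1) with hTs
  set OLD := M'.filter (fun P => ¬ Kh n g ℓ b P.1 ∧ ¬ Kh n g ℓ b P.2) with hOLD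
  set U := ((M'.image Prod.fst) ∪ (M'.image Prod.snd)).filter (fun z => Kh n g ℓ b z) with hU
  set U' := U.filter (fun z => ¬ InK ℓ r z) with hU'
  set E' := if (0 < ℓ ∧ f (ℓ - 1) = b) ∧ ∀ z ∈ U, ℓ ≤ z then ({ℓ - 1} : Finset ℕ) else ∅
    with hE'
  set F' := if (r + 1 < n ∧ f (r + 1) = b) ∧ ∀ z ∈ U, z ≤ r then ({r + 1} : Finset ℕ) else ∅
    with hF'
  set A := (Sf.image Prod.fst) ∪ E' ∪ U' ∪ F' ∪ (Ts.image Prod.snd) with hA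
  set M := OLD ∪ chainOf A with hMdef
  -- basic membership lemmas
  have hUm : ∀ z ∈ U, Kh n g ℓ b z ∧ ∃ P ∈ M', z = P.1 ∨ z = P.2 := by
    intro z hz
    rw [hU, Finset.mem_filter, Finset.mem_union] at hz
    refine ⟨hz.2, ?_⟩
    rcases hz.1 with h | h
    · obtain ⟨P, hP, hPe⟩ := Finset.mem_image.mp h
      exact ⟨P, hP, Or.inl hPe.symm⟩
    · obtain ⟨P, hP, hPe⟩ := Finset.mem_image.mp h
      exact ⟨P, hP, Or.inr hPe.symm⟩
  have hUm' : ∀ P ∈ M', ∀ z, (z = P.1 ∨ z = P.2) → Kh n g ℓ b z → z ∈ U := by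
    intro P hP z hz hK
    rw [hU, Finset.mem_filter, Finset.mem_union]
    refine ⟨?_, hK⟩
    rcases hz with rfl | rfl
    · exact Or.inl (Finset.mem_image.mpr ⟨P, hP, rfl⟩)
    · exact Or.inr (Finset.mem_image.mpr ⟨P, hP, rfl⟩)
  have huniq : ∀ z1 ∈ U, ∀ z2 ∈ U, z1 = z2 := by
    have haux : ∀ z1 ∈ U, ∀ z2 ∈ U, ¬ z1 < z2 := by
      intro z1 h1 z2 h2 hlt
      obtain ⟨hK1, P, hP, hpat1⟩ := hUm z1 h1
      obtain ⟨hK2, Q, hQ, hpat2⟩ := hUm z2 h2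
      obtain ⟨z, hz1, hz2, hz3⟩ := hM.sep P hP Q hQ z1 z2 hpat1 hpat2 hlt
      have hKz : Kh n g ℓ b z := kh_interval hK1 hK2 hz1 hz2
      exact hz3 (by rw [kh_colour hKz, kh_colour hK1])
    intro z1 h1 z2 h2
    rcases lt_trichotomy z1 z2 with h | h | h
    · exact absurd h (haux z1 h1 z2 h2)
    · exact h
    · exact absurd h (haux z2 h2 z1 h1)
  have hnotboth : ∀ P ∈ M', ¬ (Kh n g ℓ b P.1 ∧ Kh n g ℓ b P.2) := by
    rintro P hP ⟨h1, h2⟩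
    obtain ⟨z, hz1, hz2, hz3⟩ :=
      hM.sep P hP P hP P.1 P.2 (Or.inl rfl) (Or.inr rfl) (hM.lt P hP)
    exact hz3 (by rw [kh_colour (kh_interval h1 h2 hz1 hz2), kh_colour h1])
  have hSfmem : ∀ P ∈ Sf, P ∈ M' ∧ Kh n g ℓ b P.2 ∧ ¬ Kh n g ℓ b P.1 := by
    intro P hP
    rw [hSf, Finset.mem_filter] at hP
    exact ⟨hP.1, hP.2, fun h => hnotboth P hP.1 ⟨h, hP.2⟩⟩
  have hTsmem : ∀ P ∈ Ts, P ∈ M' ∧ Kh n g ℓ b P.1 ∧ ¬ Kh n g ℓ b P.2 := by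
    intro P hP
    rw [hTs, Finset.mem_filter] at hP
    exact ⟨hP.1, hP.2, fun h => hnotboth P hP.1 ⟨hP.2, h⟩⟩
  have hOLDmem : ∀ P ∈ OLD, P ∈ M' ∧ ¬ Kh n g ℓ b P.1 ∧ ¬ Kh n g ℓ b P.2 := by
    intro P hP
    rw [hOLD, Finset.mem_filter] at hP
    exact ⟨hP.1, hP.2.1, hP.2.2⟩
  have hSfone : ∀ P1 ∈ Sf, ∀ P2 ∈ Sf, P1 = P2 := by
    intro P1 h1 P2 h2
    obtain ⟨hm1, hk1, _⟩ := hSfmem P1 h1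
    obtain ⟨hm2, hk2, _⟩ := hSfmem P2 h2
    have e2 : P1.2 = P2.2 :=
      huniq _ (hUm' P1 hm1 _ (Or.inr rfl) hk1) _ (hUm' P2 hm2 _ (Or.inr rfl) hk2)
    by_contra hne
    have hl := hM.lam P1 hm1 P2 hm2 hne
    have l1 := hM.lt P1 hm1
    have l2 := hM.lt P2 hm2
    unfold LamRel at hl
    omega
  have hTsone : ∀ P1 ∈ Ts, ∀ P2 ∈ Ts, P1 = P2 := by
    intro P1 h1 P2 h2
    obtain ⟨hm1, hk1, _⟩ := hTsmem P1 h1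
    obtain ⟨hm2, hk2, _⟩ := hTsmem P2 h2
    have e1 : P1.1 = P2.1 :=
      huniq _ (hUm' P1 hm1 _ (Or.inl rfl) hk1) _ (hUm' P2 hm2 _ (Or.inl rfl) hk2)
    by_contra hne
    have hl := hM.lam P1 hm1 P2 hm2 hne
    have l1 := hM.lt P1 hm1
    have l2 := hM.lt P2 hm2
    unfold LamRel at hl
    omega
  have hE'mem : ∀ x ∈ E', x = ℓ - 1 ∧ (0 < ℓ ∧ f (ℓ - 1) = b) ∧ ∀ z ∈ U, ℓ ≤ z := by
    rw [hE']
    split_ifs with h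
    · intro x hx
      rw [Finset.mem_singleton] at hx
      exact ⟨hx, h.1, h.2⟩
    · intro x hx
      exact absurd hx (Finset.notMem_empty _)
  have hF'mem : ∀ x ∈ F', x = r + 1 ∧ (r + 1 < n ∧ f (r + 1) = b) ∧ ∀ z ∈ U, z ≤ r := by
    rw [hF']
    split_ifs with h
    · intro x hx
      rw [Finset.mem_singleton] at hx
      exact ⟨hx, h.1, h.2⟩
    · intro x hx
      exact absurd hx (Finset.notMem_empty _)
  have hU'mem : ∀ x ∈ U', x ∈ U ∧ Kh n g ℓ b x ∧ ¬ InK ℓ r x := by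
    intro x hx
    rw [hU', Finset.mem_filter] at hx
    exact ⟨hx.1, (hUm x hx.1).1, hx.2⟩
  -- classification of A-elements
  have hAsplit : ∀ x ∈ A, (∃ P ∈ Sf, x = P.1) ∨ (x ∈ E' ∨ x ∈ U' ∨ x ∈ F') ∨
      (∃ Q ∈ Ts, x = Q.2) := by
    intro x hx
    rw [hA] at hx
    simp only [Finset.mem_union] at hx
    rcases hx with ((((hx | hx) | hx) | hx) | hx)
    · obtain ⟨P, hP, hPe⟩ := Finset.mem_image.mp hx
      exact Or.inl ⟨P, hP, hPe.symm⟩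
    · exact Or.inr (Or.inl (Or.inl hx))
    · exact Or.inr (Or.inl (Or.inr (Or.inl hx)))
    · exact Or.inr (Or.inl (Or.inr (Or.inr hx)))
    · obtain ⟨P, hP, hPe⟩ := Finset.mem_image.mp hx
      exact Or.inr (Or.inr ⟨P, hP, hPe.symm⟩)
  have hAclass : ∀ x ∈ A, (Kh n g ℓ b x ∧ ¬ InK ℓ r x) ∨
      (¬ Kh n g ℓ b x ∧ ((∃ P ∈ Sf, x = P.1) ∨ (∃ Q ∈ Ts, x = Q.2))) := by
    intro x hx
    rcases hAsplit x hx with ⟨P, hP, rfl⟩ | (he | hu | hf) | ⟨Q, hQ, rfl⟩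
    · exact Or.inr ⟨(hSfmem P hP).2.2, Or.inl ⟨P, hP, rfl⟩⟩
    · obtain ⟨rfl, hEL, _⟩ := hE'mem x he
      exact Or.inl ⟨mc.eL_kh hEL.1 hEL.2, by unfold InK; omega⟩
    · obtain ⟨_, hk, hik⟩ := hU'mem x hu
      exact Or.inl ⟨hk, hik⟩
    · obtain ⟨rfl, hER, _⟩ := hF'mem x hf
      exact Or.inl ⟨mc.eR_kh hER.1 hER.2, by unfold InK; omega⟩
    · exact Or.inr ⟨(hTsmem Q hQ).2.2, Or.inr ⟨Q, hQ, rfl⟩⟩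
  have hAn : ∀ x ∈ A, x < n := by
    intro x hx
    rcases hAclass x hx with ⟨hk, _⟩ | ⟨_, ⟨P, hP, rfl⟩ | ⟨Q, hQ, rfl⟩⟩
    · exact hk.1
    · have h1 := hM.lt P (hSfmem P hP).1
      have h2 := hM.ub P (hSfmem P hP).1
      omega
    · exact hM.ub Q (hTsmem Q hQ).1
  have hAnotK : ∀ x ∈ A, ¬ InK ℓ r x := by
    intro x hx
    rcases hAclass x hx with ⟨_, hik⟩ | ⟨hk, _⟩
    · exact hik
    · exact mc.notK_of_notKh hk
  have hAb : ∀ x ∈ A, f x = b := by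
    intro x hx
    rcases hAclass x hx with ⟨hk, hik⟩ | ⟨hk, ⟨P, hP, rfl⟩ | ⟨Q, hQ, rfl⟩⟩
    · rw [← mc.fg_out hik]
      exact kh_colour hk
    · obtain ⟨hPM, hk2, hk1⟩ := hSfmem P hP
      rw [← mc.fg_out (mc.notK_of_notKh hk1), hM.mono P hPM]
      exact kh_colour hk2
    · obtain ⟨hQM, hk1, hk2⟩ := hTsmem Q hQ
      rw [← mc.fg_out (mc.notK_of_notKh hk2), ← hM.mono Q hQM]
      exact kh_colour hk1
  have hsleast : ∀ P ∈ Sf, ∀ x ∈ A, x ≠ P.1 → P.1 < x := by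
    intro P hP x hx hne
    obtain ⟨hPM, hk2, hk1⟩ := hSfmem P hP
    have hPlt := hM.lt P hPM
    rcases hAclass x hx with ⟨hk, _⟩ | ⟨hkx, ⟨Q, hQ, rfl⟩ | ⟨Q, hQ, rfl⟩⟩
    · rcases side hk1 hk2 hk with h | h
      · omega
      · omega
    · exact absurd (congrArg Prod.fst (hSfone P hP Q hQ)) (fun h => hne (h ▸ rfl))
    · obtain ⟨hQM, hqk1, _⟩ := hTsmem Q hQ
      have hQlt := hM.lt Q hQM
      rcases side hk1 hk2 hqk1 with h | h
      · omega
      · omega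
  have htgreatest : ∀ Q ∈ Ts, ∀ x ∈ A, x ≠ Q.2 → x < Q.2 := by
    intro Q hQ x hx hne
    obtain ⟨hQM, hk1, hk2⟩ := hTsmem Q hQ
    have hQlt := hM.lt Q hQM
    rcases hAclass x hx with ⟨hk, _⟩ | ⟨hkx, ⟨P, hP, rfl⟩ | ⟨P, hP, rfl⟩⟩
    · rcases side hk2 hk1 hk with h | h
      · omega
      · omega
    · obtain ⟨hPM, hpk2, _⟩ := hSfmem P hP
      have hPlt := hM.lt P hPM
      rcases side hk2 hk1 hpk2 with h | h
      · omega
      · omega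
    · exact absurd (congrArg Prod.snd (hTsone Q hQ P hP)) (fun h => hne (h.symm ▸ rfl))
  -- straddle property for two Kh elements of A
  have hstrad2 : ∀ x ∈ A, ∀ y ∈ A, Kh n g ℓ b x → Kh n g ℓ b y → x < y →
      x < ℓ ∧ r < y := by
    intro x hx y hy hkx hky hxy
    have hlr := mc.hlr
    have hxm : x ∈ E' ∨ x ∈ U' ∨ x ∈ F' := by
      rcases hAsplit x hx with ⟨P, hP, rfl⟩ | hm | ⟨Q, hQ, rfl⟩
      · exact absurd hkx (hSfmem P hP).2.2
      · exact hm
      · exact absurd hkx (hTsmem Q hQ).2.2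
    have hym : y ∈ E' ∨ y ∈ U' ∨ y ∈ F' := by
      rcases hAsplit y hy with ⟨P, hP, rfl⟩ | hm | ⟨Q, hQ, rfl⟩
      · exact absurd hky (hSfmem P hP).2.2
      · exact hm
      · exact absurd hky (hTsmem Q hQ).2.2
    rcases hxm with hxe | hxu | hxf
    · obtain ⟨rfl, hEL, hcond⟩ := hE'mem x hxe
      rcases hym with hye | hyu | hyf
      · obtain ⟨rfl, _, _⟩ := hE'mem y hye
        omega
      · obtain ⟨hyU, _, hik⟩ := hU'mem y hyu
        have := hcond y hyU
        unfold InK at hik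
        omega
      · obtain ⟨rfl, _, _⟩ := hF'mem y hyf
        omega
    · obtain ⟨hxU, _, hikx⟩ := hU'mem x hxu
      rcases hym with hye | hyu | hyf
      · obtain ⟨rfl, _, hcond⟩ := hE'mem y hye
        have := hcond x hxU
        omega
      · obtain ⟨hyU, _, _⟩ := hU'mem y hyu
        have := huniq x hxU y hyU
        omega
      · obtain ⟨rfl, _, hcond⟩ := hF'mem y hyf
        have := hcond x hxU
        unfold InK at hikx
        omega
    · obtain ⟨rfl, hER, hcond⟩ := hF'mem x hxf
      rcases hym with hye | hyu | hyf
      · obtain ⟨rfl, _, _⟩ := hE'mem y hye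
        omega
      · obtain ⟨hyU, _, _⟩ := hU'mem y hyu
        have := hcond y hyU
        omega
      · obtain ⟨rfl, _, _⟩ := hF'mem y hyf
        omega
  -- master separation
  have hsepM : ∀ x y : ℕ, x < y →
      ((Kh n g ℓ b x ∧ x ∈ A) ∨ (¬ Kh n g ℓ b x ∧ ∃ P ∈ M', x = P.1 ∨ x = P.2)) →
      ((Kh n g ℓ b y ∧ y ∈ A) ∨ (¬ Kh n g ℓ b y ∧ ∃ P ∈ M', y = P.1 ∨ y = P.2)) →
      ∃ z, x ≤ z ∧ z ≤ y ∧ f z ≠ f x := by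
    intro x y hxy hx hy
    rcases hx with ⟨hKx, hxA⟩ | ⟨hKx, P, hP, hpat⟩
    · rcases hy with ⟨hKy, hyA⟩ | ⟨hKy, Q, hQ, hqat⟩
      · obtain ⟨h1, h2⟩ := hstrad2 x hxA y hyA hKx hKy hxy
        exact mc.strad hKx h1 hKy h2
      · have hyn : y < n := by
          rcases hqat with rfl | rfl
          · have := hM.lt Q hQ; have := hM.ub Q hQ; omega
          · exact hM.ub Q hQ
        exact mc.transfer hxy (hAnotK x hxA) (mc.notK_of_notKh hKy)
          (mc.b2 hKx hKy hyn hxy)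
    · have hxn : x < n := by
        rcases hpat with rfl | rfl
        · have := hM.lt P hP; have := hM.ub P hP; omega
        · exact hM.ub P hP
      rcases hy with ⟨hKy, hyA⟩ | ⟨hKy, Q, hQ, hqat⟩
      · exact mc.transfer hxy (mc.notK_of_notKh hKx) (hAnotK y hyA)
          (mc.b1 hKx hxn hKy hxy)
      · exact mc.transfer hxy (mc.notK_of_notKh hKx) (mc.notK_of_notKh hKy)
          (hM.sep P hP Q hQ x y hpat hqat hxy)
  -- status of endpoints of M
  have hstat : ∀ p ∈ M, ∀ x : ℕ, (x = p.1 ∨ x = p.2) →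
      ((Kh n g ℓ b x ∧ x ∈ A) ∨ (¬ Kh n g ℓ b x ∧ ∃ P ∈ M', x = P.1 ∨ x = P.2)) := by
    intro p hp x hpat
    rw [hMdef, Finset.mem_union] at hp
    rcases hp with hp | hp
    · obtain ⟨hpM, h1, h2⟩ := hOLDmem p hp
      right
      constructor
      · rcases hpat with rfl | rfl
        · exact h1
        · exact h2
      · exact ⟨p, hpM, hpat⟩
    · obtain ⟨h1, h2, _, _⟩ := chainOf_mem.mp hp
      have hxA : x ∈ A := by rcases hpat with rfl | rfl <;> assumption
      rcases hAclass x hxA with ⟨hk, _⟩ | ⟨hk, ⟨P, hP, he⟩ | ⟨Q, hQ, he⟩⟩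
      · exact Or.inl ⟨hk, hxA⟩
      · exact Or.inr ⟨hk, P, (hSfmem P hP).1, Or.inl he⟩
      · exact Or.inr ⟨hk, Q, (hTsmem Q hQ).1, Or.inr he⟩
  -- chain vs OLD laminarity
  have hCO : ∀ p ∈ chainOf A, ∀ R ∈ OLD, LamRel p R := by
    intro p hp R hR
    obtain ⟨hx, hy, hplt, _⟩ := chainOf_mem.mp hp
    obtain ⟨hRM, hR1, hR2⟩ := hOLDmem R hR
    have hRlt := hM.lt R hRM
    have hconv : LamRel (p.1, p.2) (R.1, R.2) → LamRel p R := by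
      intro h
      unfold LamRel at h ⊢
      exact h
    by_cases hKx : Kh n g ℓ b p.1 <;> by_cases hKy : Kh n g ℓ b p.2
    · exact hconv (mc.cmpKK hR1 hR2 hRlt hKx hKy hplt)
    · -- p.2 not Kh: must be a t-endpoint
      rcases hAclass p.2 hy with ⟨hk, _⟩ | ⟨hk, ⟨P, hP, he⟩ | ⟨Q, hQ, he⟩⟩
      · exact absurd hk hKy
      · exfalso
        have := hsleast P hP p.1 hx (by omega)
        omega
      · have hQM := (hTsmem Q hQ).1
        have hQk1 := (hTsmem Q hQ).2.1
        have hne : Q ≠ R := by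
          intro hcon
          rw [hcon] at hQk1
          exact hR1 hQk1
        have := mc.cmp2 hM hQM hRM hne hQk1 hR1 hR2 hKx (by rw [← he]; exact hplt)
        rw [← he] at this
        exact hconv this
    · -- p.1 not Kh: must be an s-endpoint
      rcases hAclass p.1 hx with ⟨hk, _⟩ | ⟨hk, ⟨P, hP, he⟩ | ⟨Q, hQ, he⟩⟩
      · exact absurd hk hKx
      · have hPM := (hSfmem P hP).1
        have hPk2 := (hSfmem P hP).2.1
        have hne : P ≠ R := by
          intro hcon
          rw [hcon] at hPk2
          exact hR2 hPk2
        have := mc.cmp1 hM hPM hRM hne hPk2 hR1 hR2 hKy (by rw [← he]; exact hplt)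
        rw [← he] at this
        exact hconv this
      · exfalso
        have := htgreatest Q hQ p.2 hy (by omega)
        omega
    · -- neither Kh : p.1 is s-endpoint, p.2 is t-endpoint
      rcases hAclass p.1 hx with ⟨hk, _⟩ | ⟨hk1, ⟨P, hP, he1⟩ | ⟨Q, hQ, he1⟩⟩
      · exact absurd hk hKx
      · rcases hAclass p.2 hy with ⟨hk, _⟩ | ⟨hk2, ⟨P2, hP2, he2⟩ | ⟨Q, hQ, he2⟩⟩
        · exact absurd hk hKy
        · exfalso
          have := hsleast P2 hP2 p.1 hx (by omega)
          omega
        · have hPM := (hSfmem P hP).1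
          have hPk2 := (hSfmem P hP).2.1
          have hQM := (hTsmem Q hQ).1
          have hQk1 := (hTsmem Q hQ).2.1
          have hneP : P ≠ R := fun hcon => hR2 (hcon ▸ hPk2)
          have hneQ : Q ≠ R := fun hcon => hR1 (hcon ▸ hQk1)
          have := mc.cmp3 hM hPM hQM hRM hneP hneQ hPk2 hQk1 hR1 hR2
            (by rw [← he1]; exact hKx) (by rw [← he2]; exact hKy)
            (by rw [← he1, ← he2]; exact hplt)
          rw [← he1, ← he2] at this
          exact hconv this
      · exfalso
        have := htgreatest Q hQ p.2 hy (by omega)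
        omega
  -- OLD and chain are disjoint
  have hdisjMC : Disjoint OLD (chainOf A) := by
    rw [Finset.disjoint_left]
    intro p hpO hpC
    obtain ⟨hpM, h1, h2⟩ := hOLDmem p hpO
    obtain ⟨hx, hy, hplt, _⟩ := chainOf_mem.mp hpC
    rcases hAclass p.1 hx with ⟨hk, _⟩ | ⟨hk1, ⟨P, hP, he1⟩ | ⟨Q, hQ, he1⟩⟩
    · exact h1 hk
    · -- p.1 = P.1 with P ∈ Sf ⊆ M', p ≠ P since Kh P.2 but ¬ Kh p.2
      have hPM := (hSfmem P hP).1
      have hPk2 := (hSfmem P hP).2.1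
      have hne : p ≠ P := fun hcon => h2 (hcon ▸ hPk2)
      have hl := hM.lam p hpM P hPM hne
      have l1 := hM.lt p hpM
      have l2 := hM.lt P hPM
      unfold LamRel at hl
      omega
    · exfalso
      have := htgreatest Q hQ p.2 hy (by omega)
      omega
  -- the good family
  have hgood : IsGood n f M := by
    constructor
    · intro p hp
      rw [hMdef, Finset.mem_union] at hp
      rcases hp with hp | hp
      · exact hM.lt p (hOLDmem p hp).1
      · exact (chainOf_mem.mp hp).2.2.1
    · intro p hp
      rw [hMdef, Finset.mem_union] at hp
      rcases hp with hp | hp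
      · exact hM.ub p (hOLDmem p hp).1
      · exact hAn p.2 (chainOf_mem.mp hp).2.1
    · intro p hp
      rw [hMdef, Finset.mem_union] at hp
      rcases hp with hp | hp
      · obtain ⟨hpM, h1, h2⟩ := hOLDmem p hp
        rw [← mc.fg_out (mc.notK_of_notKh h1), ← mc.fg_out (mc.notK_of_notKh h2)]
        exact hM.mono p hpM
      · obtain ⟨hx, hy, _, _⟩ := chainOf_mem.mp hp
        rw [hAb p.1 hx, hAb p.2 hy]
    · intro p hp q hq x y hxpat hypat hxy
      exact hsepM x y hxy (hstat p hp x hxpat) (hstat q hq y hypat)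
    · intro p hp q hq hne
      rw [hMdef, Finset.mem_union] at hp hq
      rcases hp with hp | hp <;> rcases hq with hq | hq
      · exact hM.lam p (hOLDmem p hp).1 q (hOLDmem q hq).1 hne
      · exact (hCO q hq p hp).symm
      · exact hCO p hp q hq
      · exact chainOf_lam hp hq hne
  -- cardinality accounting
  have hdisjOS : Disjoint OLD Sf := by
    rw [Finset.disjoint_left]
    intro P h1 h2
    exact (hOLDmem P h1).2.2 (hSfmem P h2).2.1
  have hdisjOT : Disjoint OLD Ts := by
    rw [Finset.disjoint_left]
    intro P h1 h2
    exact (hOLDmem P h1).2.1 (hTsmem P h2).2.1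
  have hdisjST : Disjoint Sf Ts := by
    rw [Finset.disjoint_left]
    intro P h1 h2
    exact (hSfmem P h1).2.2 (hTsmem P h2).2.1
  have hM'eq : M' = OLD ∪ Sf ∪ Ts := by
    apply Finset.ext
    intro P
    simp only [Finset.mem_union, hOLD, hSf, hTs, Finset.mem_filter]
    constructor
    · intro hP
      by_cases h2 : Kh n g ℓ b P.2
      · exact Or.inl (Or.inr ⟨hP, h2⟩)
      · by_cases h1 : Kh n g ℓ b P.1
        · exact Or.inr ⟨hP, h1⟩
        · exact Or.inl (Or.inl ⟨hP, h1, h2⟩)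
    · rintro ((h | h) | h) <;> exact h.1
  have hcardM' : M'.card = OLD.card + Sf.card + Ts.card := by
    rw [hM'eq, Finset.card_union_of_disjoint, Finset.card_union_of_disjoint hdisjOS]
    rw [Finset.disjoint_union_left]
    exact ⟨hdisjOT, hdisjST⟩
  have hcardM : M.card = OLD.card + (chainOf A).card := by
    rw [hMdef, Finset.card_union_of_disjoint hdisjMC]
  -- card of A
  have hSfimg : (Sf.image Prod.fst).card = Sf.card := by
    apply Finset.card_image_of_injOn
    intro P1 h1 P2 h2 _
    exact hSfone P1 h1 P2 h2
  have hTsimg : (Ts.image Prod.snd).card = Ts.card := by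
    apply Finset.card_image_of_injOn
    intro P1 h1 P2 h2 _
    exact hTsone P1 h1 P2 h2
  have hmemSfimg : ∀ x ∈ Sf.image Prod.fst, ¬ Kh n g ℓ b x := by
    intro x hx
    obtain ⟨P, hP, rfl⟩ := Finset.mem_image.mp hx
    exact (hSfmem P hP).2.2
  have hmemTsimg : ∀ x ∈ Ts.image Prod.snd, ¬ Kh n g ℓ b x := by
    intro x hx
    obtain ⟨P, hP, rfl⟩ := Finset.mem_image.mp hx
    exact (hTsmem P hP).2.2
  have hmemE'k : ∀ x ∈ E', Kh n g ℓ b x := by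
    intro x hx
    obtain ⟨rfl, hEL, _⟩ := hE'mem x hx
    exact mc.eL_kh hEL.1 hEL.2
  have hmemF'k : ∀ x ∈ F', Kh n g ℓ b x := by
    intro x hx
    obtain ⟨rfl, hER, _⟩ := hF'mem x hx
    exact mc.eR_kh hER.1 hER.2
  have hd1 : Disjoint (Sf.image Prod.fst) E' := by
    rw [Finset.disjoint_left]
    intro x h1 h2
    exact hmemSfimg x h1 (hmemE'k x h2)
  have hd2 : Disjoint (Sf.image Prod.fst ∪ E') U' := by
    rw [Finset.disjoint_left]
    intro x h1 h2
    obtain ⟨hxU, hxk, _⟩ := hU'mem x h2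
    rcases Finset.mem_union.mp h1 with h | h
    · exact hmemSfimg x h hxk
    · obtain ⟨rfl, hEL, hcond⟩ := hE'mem x h
      have := hcond _ hxU
      omega
  have hd3 : Disjoint (Sf.image Prod.fst ∪ E' ∪ U') F' := by
    rw [Finset.disjoint_left]
    intro x h1 h2
    obtain ⟨rfl, hER, hcond⟩ := hF'mem x h2
    rcases Finset.mem_union.mp h1 with h | h
    · rcases Finset.mem_union.mp h with h | h
      · exact hmemSfimg _ h (hmemF'k _ h2)
      · obtain ⟨he, hEL, _⟩ := hE'mem _ h
        have := mc.hlr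
        omega
    · obtain ⟨hxU, _, _⟩ := hU'mem _ h
      have := hcond _ hxU
      omega
  have hd4 : Disjoint (Sf.image Prod.fst ∪ E' ∪ U' ∪ F') (Ts.image Prod.snd) := by
    rw [Finset.disjoint_left]
    intro x h1 h2
    obtain ⟨Q, hQ, hQe⟩ := Finset.mem_image.mp h2
    have hQk1 := (hTsmem Q hQ).2.1
    have hQk2 := (hTsmem Q hQ).2.2
    have hQlt := hM.lt Q (hTsmem Q hQ).1
    rcases Finset.mem_union.mp h1 with h | h
    · rcases Finset.mem_union.mp h with h | h
      · rcases Finset.mem_union.mp h with h | h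
        · obtain ⟨P, hP, hPe⟩ := Finset.mem_image.mp h
          have hPk2 := (hSfmem P hP).2.1
          have hPk1 := (hSfmem P hP).2.2
          have hPlt := hM.lt P (hSfmem P hP).1
          have := side hPk1 hPk2 hQk1
          omega
        · subst hQe
          exact hQk2 (hmemE'k _ h)
      · subst hQe
        obtain ⟨_, hk, _⟩ := hU'mem _ h
        exact hQk2 hk
    · subst hQe
      exact hQk2 (hmemF'k _ h)
  have hcardA : A.card = Sf.card + E'.card + U'.card + F'.card + Ts.card := by
    rw [hA, Finset.card_union_of_disjoint hd4, Finset.card_union_of_disjoint hd3,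
      Finset.card_union_of_disjoint hd2, Finset.card_union_of_disjoint hd1,
      hSfimg, hTsimg]
  refine ⟨M, hgood, ?_⟩
  rcases Finset.eq_empty_or_nonempty A with hAe | hAne
  · -- A empty : everything degenerate
    have hSfe : Sf = ∅ := by
      rw [Finset.eq_empty_iff_forall_notMem]
      intro P hP
      have : P.1 ∈ A := by
        rw [hA]
        simp only [Finset.mem_union]
        exact Or.inl (Or.inl (Or.inl (Or.inl (Finset.mem_image.mpr ⟨P, hP, rfl⟩))))
      rw [hAe] at this
      exact Finset.notMem_empty _ this
    have hTse : Ts = ∅ := by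
      rw [Finset.eq_empty_iff_forall_notMem]
      intro P hP
      have : P.2 ∈ A := by
        rw [hA]
        simp only [Finset.mem_union]
        exact Or.inr (Finset.mem_image.mpr ⟨P, hP, rfl⟩)
      rw [hAe] at this
      exact Finset.notMem_empty _ this
    have hUe : ∀ z, z ∉ U := by
      intro z hz
      obtain ⟨hk, P, hP, hpat⟩ := hUm z hz
      rcases hpat with rfl | rfl
      · have : P ∈ Ts := by rw [hTs, Finset.mem_filter]; exact ⟨hP, hk⟩
        rw [hTse] at this
        exact Finset.notMem_empty _ this
      · have : P ∈ Sf := by rw [hSf, Finset.mem_filter]; exact ⟨hP, hk⟩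
        rw [hSfe] at this
        exact Finset.notMem_empty _ this
    have hE'e : E' = ∅ := by
      have : E' ⊆ A := by
        rw [hA]
        intro x hx
        simp only [Finset.mem_union]
        exact Or.inl (Or.inl (Or.inl (Or.inr hx)))
      rw [hAe] at this
      exact Finset.subset_empty.mp this
    have hF'e : F' = ∅ := by
      have : F' ⊆ A := by
        rw [hA]
        intro x hx
        simp only [Finset.mem_union]
        exact Or.inl (Or.inr hx)
      rw [hAe] at this
      exact Finset.subset_empty.mp this
    have hnoEL : ¬ (0 < ℓ ∧ f (ℓ - 1) = b) := by
      intro hEL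
      have : E' = {ℓ - 1} := by
        rw [hE', if_pos ⟨hEL, fun z hz => absurd hz (hUe z)⟩]
      rw [hE'e] at this
      exact absurd this.symm (Finset.singleton_ne_empty _)
    have hnoER : ¬ (r + 1 < n ∧ f (r + 1) = b) := by
      intro hER
      have : F' = {r + 1} := by
        rw [hF', if_pos ⟨hER, fun z hz => absurd hz (hUe z)⟩]
      rw [hF'e] at this
      exact absurd this.symm (Finset.singleton_ne_empty _)
    rw [if_neg hnoEL, if_neg hnoER, hcardM', hSfe, hTse, hcardM]
    simp only [Finset.card_empty]
    omega
  · -- A nonempty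
    have hchain : (chainOf A).card = A.card - 1 := chainOf_card hAne
    have hApos : 1 ≤ A.card := Finset.card_pos.mpr hAne
    have hkbound : (if 0 < ℓ ∧ f (ℓ - 1) = b then 1 else 0) +
        (if r + 1 < n ∧ f (r + 1) = b then 1 else 0) ≤
        E'.card + U'.card + F'.card := by
      by_cases hUL : ∃ z ∈ U, z < ℓ
      · obtain ⟨z, hzU, hzl⟩ := hUL
        have hzU' : z ∈ U' := by
          rw [hU', Finset.mem_filter]
          exact ⟨hzU, by unfold InK; omega⟩
        have hU'pos : 1 ≤ U'.card := Finset.card_pos.mpr ⟨z, hzU'⟩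
        have hFcond : ∀ z' ∈ U, z' ≤ r := by
          intro z' hz'
          have := huniq z' hz' z hzU
          have := mc.hlr
          omega
        by_cases hER : r + 1 < n ∧ f (r + 1) = b
        · have : F' = {r + 1} := by rw [hF', if_pos ⟨hER, hFcond⟩]
          rw [if_pos hER, this]
          simp only [Finset.card_singleton]
          split_ifs <;> omega
        · rw [if_neg hER]
          split_ifs <;> omega
      · by_cases hUR : ∃ z ∈ U, r < z
        · obtain ⟨z, hzU, hzr⟩ := hUR
          have hzU' : z ∈ U' := by
            rw [hU', Finset.mem_filter]
            exact ⟨hzU, by unfold InK; omega⟩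
          have hU'pos : 1 ≤ U'.card := Finset.card_pos.mpr ⟨z, hzU'⟩
          have hEcond : ∀ z' ∈ U, ℓ ≤ z' := by
            intro z' hz'
            have := huniq z' hz' z hzU
            have := mc.hlr
            omega
          by_cases hEL : 0 < ℓ ∧ f (ℓ - 1) = b
          · have : E' = {ℓ - 1} := by rw [hE', if_pos ⟨hEL, hEcond⟩]
            rw [if_pos hEL, this]
            simp only [Finset.card_singleton]
            split_ifs <;> omega
          · rw [if_neg hEL]
            split_ifs <;> omega
        · have hcondL : ∀ z ∈ U, ℓ ≤ z := by
            intro z hz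
            by_contra h
            exact hUL ⟨z, hz, by omega⟩
          have hcondR : ∀ z ∈ U, z ≤ r := by
            intro z hz
            by_contra h
            exact hUR ⟨z, hz, by omega⟩
          by_cases hEL : 0 < ℓ ∧ f (ℓ - 1) = b <;>
            by_cases hER : r + 1 < n ∧ f (r + 1) = b
          · have he : E' = {ℓ - 1} := by rw [hE', if_pos ⟨hEL, hcondL⟩]
            have hf : F' = {r + 1} := by rw [hF', if_pos ⟨hER, hcondR⟩]
            rw [if_pos hEL, if_pos hER, he, hf]
            simp only [Finset.card_singleton]
            omega
          · have he : E' = {ℓ - 1} := by rw [hE', if_pos ⟨hEL, hcondL⟩]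
            rw [if_pos hEL, if_neg hER, he]
            simp only [Finset.card_singleton]
            omega
          · have hf : F' = {r + 1} := by rw [hF', if_pos ⟨hER, hcondR⟩]
            rw [if_neg hEL, if_pos hER, hf]
            simp only [Finset.card_singleton]
            omega
          · rw [if_neg hEL, if_neg hER]
            omega
    rw [hcardM', hcardM, hchain]
    omega

end MoveCtx

/-! ### Path graph plumbing -/

section Plumbing

variable {C : Type*} {n : ℕ}

noncomputable def extF (n : ℕ) (d : C) (ω : Fin n → C) : ℕ → C :=
  fun i => if h : i < n then ω ⟨i, h⟩ else d

lemma extF_lt {d : C} {ω : Fin n → C} {i : ℕ} (h : i < n) :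
    extF n d ω i = ω ⟨i, h⟩ := dif_pos h

lemma mono_walk_const (ω : Fin n → C) {u w : Fin n}
    (p : (monoSubgraph (pathGraph n) ω).Walk u w) :
    ∀ z : Fin n, min u.val w.val ≤ z.val → z.val ≤ max u.val w.val → ω z = ω u := by
  induction p with
  | @nil u =>
    intro z h1 h2
    simp only [min_self, max_self] at h1 h2
    have hz : z = u := Fin.ext (le_antisymm h2 h1)
    rw [hz]
  | @cons u x w h p ih =>
    intro z h1 h2
    obtain ⟨hadj, hcol⟩ := h
    rw [SimpleGraph.pathGraph_adj] at hadj
    by_cases hz : z = u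
    · rw [hz]
    · have hzval : z.val ≠ u.val := fun hh => hz (Fin.ext hh)
      have hzx : min x.val w.val ≤ z.val ∧ z.val ≤ max x.val w.val := by omega
      rw [ih z hzx.1 hzx.2]
      exact hcol.symm

lemma reach_of_const (ω : Fin n → C) :
    ∀ (m : ℕ) (u w : Fin n), u.val ≤ w.val → w.val - u.val = m →
    (∀ z : Fin n, u.val ≤ z.val → z.val ≤ w.val → ω z = ω u) →
    (monoSubgraph (pathGraph n) ω).Reachable u w := by
  intro m
  induction m with
  | zero =>
    intro u w h1 h2 _
    have : u = w := Fin.ext (by omega)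
    rw [this]
  | succ m ih =>
    intro u w h1 h2 hconst
    have hun : u.val + 1 < n := by have := w.isLt; omega
    set u' : Fin n := ⟨u.val + 1, hun⟩ with hu'
    have hadj : (monoSubgraph (pathGraph n) ω).Adj u u' := by
      refine ⟨?_, ?_⟩
      · rw [SimpleGraph.pathGraph_adj]
        left
        rfl
      · exact (hconst u' (by simp [hu']) (by simp [hu']; omega)).symm
    refine hadj.reachable.trans (ih u' w (by simp [hu']; omega) (by simp [hu']; omega) ?_)
    intro z hz1 hz2
    have e1 : ω z = ω u := hconst z (by simp [hu'] at hz1; omega) hz2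
    have e2 : ω u' = ω u := hconst u' (by simp [hu']) (by simp [hu']; omega)
    rw [e1, ← e2]

lemma reach_iff (ω : Fin n → C) (u w : Fin n) :
    (monoSubgraph (pathGraph n) ω).Reachable u w ↔
    ∀ z : Fin n, min u.val w.val ≤ z.val → z.val ≤ max u.val w.val → ω z = ω u := by
  constructor
  · intro h
    obtain ⟨p⟩ := h
    exact mono_walk_const ω p
  · intro h
    rcases le_total u.val w.val with hle | hle
    · exact reach_of_const ω (w.val - u.val) u w hle rfl
        (fun z h1 h2 => h z (by omega) (by omega))
    · have hwu : ∀ z : Fin n, w.val ≤ z.val → z.val ≤ u.val → ω z = ω w := by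
        intro z h1 h2
        have e1 := h z (by omega) (by omega)
        have e2 := h w (by omega) (by omega)
        rw [e1, ← e2]
      exact (reach_of_const ω (u.val - w.val) w u hle rfl hwu).symm

end Plumbing


section Master

variable {C : Type*} {n : ℕ}

lemma move_ctx (d : C) (ω : Fin n → C) (v : Fin n) (b : C) (hb : b ≠ ω v) :
    ∃ ℓ r : ℕ, MoveCtx n (extF n d ω) (extF n d (floodMove (pathGraph n) ω v b)) ℓ r b := by
  classical
  set f := extF n d ω with hf
  have hfv : ∀ (w : ℕ) (hw : w < n), f w = ω ⟨w, hw⟩ := fun w hw => dif_pos hw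
  have hvn := v.isLt
  set L := (Finset.range (v.val + 1)).filter
    (fun z => ∀ w ∈ Finset.Icc z v.val, f w = f v.val) with hL
  have hvL : v.val ∈ L := by
    rw [hL, Finset.mem_filter, Finset.mem_range]
    refine ⟨by omega, fun w hw => ?_⟩
    rw [Finset.mem_Icc] at hw
    have : w = v.val := by omega
    rw [this]
  set R := (Finset.Ico v.val n).filter
    (fun z => ∀ w ∈ Finset.Icc v.val z, f w = f v.val) with hR
  have hvR : v.val ∈ R := by
    rw [hR, Finset.mem_filter, Finset.mem_Ico]
    refine ⟨⟨le_refl _, hvn⟩, fun w hw => ?_⟩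
    rw [Finset.mem_Icc] at hw
    have : w = v.val := by omega
    rw [this]
  set ℓ := L.min' ⟨v.val, hvL⟩ with hldef
  set r := R.max' ⟨v.val, hvR⟩ with hrdef
  have hlmem : ℓ ∈ L := Finset.min'_mem _ _
  have hrmem : r ∈ R := Finset.max'_mem _ _
  rw [hL, Finset.mem_filter, Finset.mem_range] at hlmem
  rw [hR, Finset.mem_filter, Finset.mem_Ico] at hrmem
  have hlv : ℓ ≤ v.val := by omega
  have hvr : v.val ≤ r := hrmem.1.1
  have hrn : r < n := hrmem.1.2
  have hconst : ∀ z, ℓ ≤ z → z ≤ r → f z = f v.val := by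
    intro z h1 h2
    rcases le_total z v.val with h | h
    · exact hlmem.2 z (Finset.mem_Icc.mpr ⟨h1, h⟩)
    · exact hrmem.2 z (Finset.mem_Icc.mpr ⟨h, h2⟩)
  have hmaxl : ℓ = 0 ∨ f (ℓ - 1) ≠ f v.val := by
    by_cases h0 : ℓ = 0
    · exact Or.inl h0
    · right
      intro hcon
      have hmem : ℓ - 1 ∈ L := by
        rw [hL, Finset.mem_filter, Finset.mem_range]
        refine ⟨by omega, fun w hw => ?_⟩
        rw [Finset.mem_Icc] at hw
        rcases Nat.eq_or_lt_of_le hw.1 with h | h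
        · rw [← h]; exact hcon
        · exact hconst w (by omega) (by omega)
      have := Finset.min'_le L _ hmem
      omega
  have hmaxr : r + 1 = n ∨ f (r + 1) ≠ f v.val := by
    by_cases h0 : r + 1 = n
    · exact Or.inl h0
    · right
      intro hcon
      have hmem : r + 1 ∈ R := by
        rw [hR, Finset.mem_filter, Finset.mem_Ico]
        refine ⟨⟨by omega, by omega⟩, fun w hw => ?_⟩
        rw [Finset.mem_Icc] at hw
        rcases Nat.eq_or_lt_of_le hw.2 with h | h
        · rw [h]; exact hcon
        · exact hconst w (by omega) (by omega)
      have := Finset.le_max' R _ hmem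
      omega
  have hreach : ∀ u : Fin n,
      (monoSubgraph (pathGraph n) ω).Reachable v u ↔ (ℓ ≤ u.val ∧ u.val ≤ r) := by
    intro u
    rw [reach_iff]
    constructor
    · intro hcst
      constructor
      · rcases le_total u.val v.val with h | h
        · have hmem : u.val ∈ L := by
            rw [hL, Finset.mem_filter, Finset.mem_range]
            refine ⟨by omega, fun w hw => ?_⟩
            rw [Finset.mem_Icc] at hw
            have hwn : w < n := by omega
            have hcw := hcst ⟨w, hwn⟩ (by simp only [Fin.val_mk]; omega)
              (by simp only [Fin.val_mk]; omega)
            rw [hfv w hwn, hfv v.val v.isLt]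
            simp only [Fin.eta]
            exact hcw
          have := Finset.min'_le L _ hmem
          omega
        · omega
      · rcases le_total u.val v.val with h | h
        · omega
        · have hmem : u.val ∈ R := by
            rw [hR, Finset.mem_filter, Finset.mem_Ico]
            refine ⟨⟨h, u.isLt⟩, fun w hw => ?_⟩
            rw [Finset.mem_Icc] at hw
            have hwn : w < n := by have := u.isLt; omega
            have hcw := hcst ⟨w, hwn⟩ (by simp only [Fin.val_mk]; omega)
              (by simp only [Fin.val_mk]; omega)
            rw [hfv w hwn, hfv v.val v.isLt]
            simp only [Fin.eta]
            exact hcw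
          have := Finset.le_max' R _ hmem
          omega
    · rintro ⟨h1, h2⟩ z hz1 hz2
      have hzn := z.isLt
      have hcz : f z.val = f v.val := hconst z.val (by omega) (by omega)
      rw [hfv z.val z.isLt, hfv v.val v.isLt] at hcz
      simpa only [Fin.eta] using hcz
  have hgchar : ∀ z, extF n d (floodMove (pathGraph n) ω v b) z =
      if ℓ ≤ z ∧ z ≤ r then b else f z := by
    intro z
    by_cases hzn : z < n
    · rw [extF_lt hzn]
      unfold floodMove
      by_cases hc : ℓ ≤ z ∧ z ≤ r
      · rw [if_pos hc, if_pos ((hreach ⟨z, hzn⟩).mpr hc)]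
      · rw [if_neg hc, if_neg (fun hr => hc ((hreach ⟨z, hzn⟩).mp hr)), hfv z hzn]
    · have hzr : ¬ (ℓ ≤ z ∧ z ≤ r) := by omega
      rw [if_neg hzr]
      show extF n d _ z = extF n d ω z
      unfold extF
      rw [dif_neg hzn, dif_neg hzn]
  have hflv : f ℓ = f v.val := hconst ℓ (le_refl _) (by omega)
  refine ⟨ℓ, r, ?_⟩
  constructor
  · omega
  · exact hrn
  · intro z h1 h2
    rw [hconst z h1 h2, hflv]
  · rcases hmaxl with h | h
    · exact Or.inl h
    · exact Or.inr (fun hcon => h (by rw [hcon, hflv]))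
  · rcases hmaxr with h | h
    · exact Or.inl h
    · exact Or.inr (fun hcon => h (by rw [hcon, hflv]))
  · rw [hflv, hfv v.val v.isLt]
    simpa only [Fin.eta] using hb
  · exact hgchar

end Master


section MasterInd

variable {C : Type*} {n : ℕ}

lemma empty_good (n : ℕ) (f : ℕ → C) : IsGood n f (∅ : Finset (ℕ × ℕ)) := by
  constructor <;> (intro p hp; exact absurd hp (Finset.notMem_empty _))

lemma master (n : ℕ) (d : C) :
    ∀ (ms : List (Fin n × C)) (ω : Fin n → C),
      (∀ u, floodSeq (pathGraph n) ms ω u = d) →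
      ∃ M : Finset (ℕ × ℕ), IsGood n (extF n d ω) M ∧
        Dn n (extF n d ω) ≤ ms.length + M.card := by
  intro ms
  induction ms with
  | nil =>
    intro ω h
    refine ⟨∅, empty_good n _, ?_⟩
    have hD0 : Dn n (extF n d ω) = 0 := by
      unfold Dn bset
      rw [Finset.card_eq_zero, Finset.filter_eq_empty_iff]
      intro i hi
      rw [Finset.mem_range] at hi
      rintro ⟨h1, h2⟩
      apply h2
      rw [extF_lt hi, extF_lt h1]
      have e1 : ω ⟨i, hi⟩ = d := h ⟨i, hi⟩
      have e2 : ω ⟨i + 1, h1⟩ = d := h ⟨i + 1, h1⟩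
      rw [e1, e2]
    omega
  | cons m ms ih =>
    intro ω h
    obtain ⟨v, bb⟩ := m
    have h' : ∀ u, floodSeq (pathGraph n) ms (floodMove (pathGraph n) ω v bb) u = d := h
    obtain ⟨M', hgood', hD'⟩ := ih (floodMove (pathGraph n) ω v bb) h'
    by_cases hb : bb = ω v
    · have heq : floodMove (pathGraph n) ω v bb = ω := by
        funext u
        unfold floodMove
        split_ifs with hrch
        · have := (reach_iff ω v u).mp hrch u (by omega) (by omega)
          rw [hb, this]
        · rfl
      rw [heq] at hgood' hD'
      refine ⟨M', hgood', ?_⟩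
      rw [List.length_cons]
      omega
    · obtain ⟨ℓ, r, mc⟩ := move_ctx d ω v bb hb
      obtain ⟨M, hgood, hcard⟩ := mc.stepM hgood'
      have hD := mc.stepD
      refine ⟨M, hgood, ?_⟩
      rw [List.length_cons]
      generalize hk : (if 0 < ℓ ∧ extF n d ω (ℓ - 1) = bb then 1 else 0) +
        (if r + 1 < n ∧ extF n d ω (r + 1) = bb then 1 else 0) = k at hD hcard
      omega

lemma flood_all {V : Type*} (G : SimpleGraph V) (d : C) :
    ∀ (l : List V) (ω : V → C) (v : V), (v ∈ l ∨ ω v = d) →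
      floodSeq G (l.map fun u => (u, d)) ω v = d := by
  intro l
  induction l with
  | nil =>
    intro ω v hv
    rcases hv with hv | hv
    · exact absurd hv List.not_mem_nil
    · exact hv
  | cons a l ih =>
    intro ω v hv
    show floodSeq G (l.map fun u => (u, d)) (floodMove G ω a d) v = d
    apply ih
    rcases hv with hv | hv
    · rcases List.mem_cons.mp hv with rfl | hv
      · right
        unfold floodMove
        rw [if_pos (Reachable.refl _)]
      · left
        exact hv
    · right
      unfold floodMove
      split_ifs
      · rfl
      · exact hv

end MasterInd


end FloodLB

/-- If `ω` is an `r`-shifted `C`-rainbow colouring of the path `P` on `n` vertices, where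
`|C| = c ≥ 2` and `r ∈ {0, …, n-1}`, then `m(P, ω) ≥ n - ⌈n / c⌉`. -/
theorem shiftedRainbow_floodCostMin_ge {C : Type*} (n c r : ℕ) (hc : 2 ≤ c) (hr : r < n)
    (ω : Fin n → C) (h : IsShiftedRainbow c r ω) :
    n - (n + c - 1) / c ≤ floodCostMin (SimpleGraph.pathGraph n) ω := by
  classical
  obtain ⟨e, hbij, he⟩ := h
  have hn : 0 < n := by omega
  have hcongr : ∀ (x y : ℕ) (hx : x < n) (hy : y < n), x ≤ y →
      ω ⟨x, hx⟩ = ω ⟨y, hy⟩ → c ∣ y - x := by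
    intro x y hx hy hxy hcol
    rw [he ⟨x, hx⟩, he ⟨y, hy⟩] at hcol
    have h1 := hbij.1 hcol
    simp only [Fin.val_mk] at h1
    have h2 : ((x + 1 : ℕ) : ZMod c) = ((y + 1 : ℕ) : ZMod c) := sub_left_inj.mp h1
    have h3 := (ZMod.natCast_eq_natCast_iff _ _ _).mp h2
    have h4 : c ∣ (y + 1) - (x + 1) := (Nat.modEq_iff_dvd' (by omega)).mp h3
    have heq : (y + 1) - (x + 1) = y - x := by omega
    rwa [heq] at h4
  have key : ∀ d : C, n - (n + c - 1) / c ≤ floodCost (SimpleGraph.pathGraph n) ω d := by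
    intro d
    have hDn : FloodLB.Dn n (FloodLB.extF n d ω) = n - 1 := by
      unfold FloodLB.Dn FloodLB.bset
      have hbs : (Finset.range n).filter
          (fun i => i + 1 < n ∧ FloodLB.extF n d ω i ≠ FloodLB.extF n d ω (i + 1)) =
          Finset.range (n - 1) := by
        apply Finset.ext
        intro i
        rw [Finset.mem_filter, Finset.mem_range, Finset.mem_range]
        constructor
        · rintro ⟨h1, h2, _⟩
          omega
        · intro hi
          have hx : i < n := by omega
          have hy : i + 1 < n := by omega
          refine ⟨by omega, by omega, ?_⟩
          intro hcol
          rw [FloodLB.extF_lt hx, FloodLB.extF_lt hy] at hcol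
          have hdvd := hcongr i (i + 1) hx hy (by omega) hcol
          have : c ≤ 1 := Nat.le_of_dvd (by omega) (by simpa using hdvd)
          omega
      rw [hbs, Finset.card_range]
    unfold floodCost
    have hne : {k | ∃ ms : List (Fin n × C), ms.length = k ∧
        ∀ u, floodSeq (SimpleGraph.pathGraph n) ms ω u = d}.Nonempty := by
      refine ⟨((List.finRange n).map (fun u => (u, d))).length, _, rfl, ?_⟩
      intro u
      exact FloodLB.flood_all _ d (List.finRange n) ω u (Or.inl (List.mem_finRange u))
    obtain ⟨ms, hlen, hflood⟩ := Nat.sInf_mem hne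
    rw [← hlen]
    obtain ⟨M, hgood, hD⟩ := FloodLB.master n d ms ω hflood
    have hMc : M.card ≤ (n - 1) / c := by
      apply FloodLB.gap_count (by omega : 0 < c) M hgood.lt hgood.ub ?_ hgood.lam
      intro p hp
      have h1 := hgood.lt p hp
      have h2 := hgood.ub p hp
      have hcol := hgood.mono p hp
      have hx : p.1 < n := by omega
      rw [FloodLB.extF_lt hx, FloodLB.extF_lt h2] at hcol
      exact hcongr p.1 p.2 hx h2 (by omega) hcol
    have harith : (n + c - 1) / c = (n - 1) / c + 1 := by
      rw [show n + c - 1 = (n - 1) + c from by omega, Nat.add_div_right _ (by omega)]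
    rw [hDn] at hD
    omega
  unfold floodCostMin
  have hne2 : {k | ∃ d : C, floodCost (SimpleGraph.pathGraph n) ω d = k}.Nonempty :=
    ⟨floodCost (SimpleGraph.pathGraph n) ω (ω ⟨0, hn⟩), ⟨_, rfl⟩⟩
  obtain ⟨d0, hd0⟩ := Nat.sInf_mem hne2
  rw [← hd0]
  exact key d0
end

section
/- Let G be a cycle on n vertices and let ω be a C-rainbow colouring of G, for some colour-set C with |C| = c ≥ 2. Then m(G,ω) ≥ n − ⌈n/c⌉. -/
open Classical SimpleGraph

/-! ### Auxiliary development

We bound the flood cost from below via a potential function: the minimum possible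
number of blocks of a *non-crossing monochromatic partition* of the vertices of the
cycle.  Each flood move decreases this minimum by at most `1` (the recoloured
monochromatic component is an arc of the cycle, and an arc never interleaves with a
set disjoint from it); a constant colouring admits the 1-block partition; and for a
rainbow colouring every non-crossing monochromatic partition has at least
`n - ⌈n/c⌉ + 1` blocks, because the consecutive pairs of its blocks form a laminar
family of intervals whose lengths are positive multiples of `c`. -/

namespace RainbowAux

variable {n : ℕ} {C : Type*}

/-- cyclic position of `x` relative to basepoint `a`. -/
def cpos (a x : Fin n) : ℕ := (x - a).val

lemma cpos_lt (a x : Fin n) : cpos a x < n := (x - a).isLt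

lemma cpos_spec (a x : Fin n) :
    cpos a x = if a.val ≤ x.val then x.val - a.val else x.val + n - a.val := by
  have ha := a.isLt; have hx := x.isLt
  unfold cpos; rw [Fin.sub_def]; simp only []
  split
  · have h1 : n - a.val + x.val = (x.val - a.val) + n := by omega
    rw [h1, Nat.add_mod_right, Nat.mod_eq_of_lt (by omega)]
  · rw [Nat.mod_eq_of_lt (by omega)]; omega

lemma cpos_eq_zero_iff {a x : Fin n} : cpos a x = 0 ↔ x = a := by
  have ha := a.isLt; have hx := x.isLt
  rw [cpos_spec, Fin.ext_iff]; split <;> omega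

lemma cpos_rebase {x y z : Fin n} (h : cpos x y ≤ cpos x z) :
    cpos y z = cpos x z - cpos x y := by
  have hx := x.isLt; have hy := y.isLt; have hz := z.isLt
  simp only [cpos_spec] at h ⊢; split_ifs at h ⊢ <;> omega

lemma cpos_back {a b : Fin n} (h : cpos a b ≠ 0) : cpos b a = n - cpos a b := by
  have ha := a.isLt; have hb := b.isLt
  simp only [cpos_spec] at h ⊢; split_ifs at h ⊢ <;> omega

lemma cpos_inj {a x y : Fin n} (h : cpos a x = cpos a y) : x = y := by
  have ha := a.isLt; have hx := x.isLt; have hy := y.isLt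
  simp only [cpos_spec] at h; rw [Fin.ext_iff]; split_ifs at h <;> omega

lemma cpos_linear {a b : Fin n} (h : a.val ≤ b.val) : cpos a b = b.val - a.val := by
  rw [cpos_spec, if_pos h]

/-- `A` and `B` interleave around the cycle. -/
def CrossSets (A B : Finset (Fin n)) : Prop :=
  ∃ a₁ ∈ A, ∃ a₂ ∈ A, ∃ b₁ ∈ B, ∃ b₂ ∈ B,
    cpos a₁ b₁ < cpos a₁ a₂ ∧ cpos a₁ a₂ < cpos a₁ b₂

lemma crossSets_mono {A A' B B' : Finset (Fin n)} (hA : A' ⊆ A) (hB : B' ⊆ B) :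
    CrossSets A' B' → CrossSets A B := by
  rintro ⟨a₁, h1, a₂, h2, b₁, h3, b₂, h4, h5⟩
  exact ⟨a₁, hA h1, a₂, hA h2, b₁, hB h3, b₂, hB h4, h5⟩

/-- A non-crossing monochromatic partition of the vertex set of the cycle. -/
structure IsGoodPart (ω : Fin n → C) (P : Finset (Finset (Fin n))) : Prop where
  nonemp : ∀ B ∈ P, B.Nonempty
  covers : ∀ x : Fin n, ∃ B ∈ P, x ∈ B
  disj : ∀ B ∈ P, ∀ B' ∈ P, B ≠ B' → ∀ x, x ∈ B → x ∉ B'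
  mono : ∀ B ∈ P, ∀ x ∈ B, ∀ y ∈ B, ω x = ω y
  ncross : ∀ B ∈ P, ∀ B' ∈ P, B ≠ B' → ¬ CrossSets B B'

lemma reachable_colour {ω : Fin n → C} {G : SimpleGraph (Fin n)} {x y : Fin n}
    (h : (monoSubgraph G ω).Reachable x y) : ω x = ω y := by
  obtain ⟨w⟩ := h
  induction w with
  | nil => rfl
  | cons h p ih => exact h.2.trans ih

lemma step_cpos {u v b : Fin n} (h : (cycleGraph n).Adj u v)
    (hu : u ≠ b) (hv : v ≠ b) :
    cpos b v = cpos b u + 1 ∨ cpos b u = cpos b v + 1 := by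
  have hb := b.isLt; have huv := u.isLt; have hvv := v.isLt
  rw [SimpleGraph.cycleGraph_adj'] at h
  have hu' : u.val ≠ b.val := fun hh => hu (Fin.ext hh)
  have hv' : v.val ≠ b.val := fun hh => hv (Fin.ext hh)
  have keyuv := cpos_spec v u
  have keyvu := cpos_spec u v
  have k1 := cpos_spec b u
  have k2 := cpos_spec b v
  replace h : cpos v u = 1 ∨ cpos u v = 1 := h
  rcases h with h | h
  · right; rw [keyuv] at h; rw [k1, k2]; split_ifs at h ⊢ <;> omega
  · left; rw [keyvu] at h; rw [k1, k2]; split_ifs at h ⊢ <;> omega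

lemma walk_below {ω : Fin n → C} {x y b₁ b₂ : Fin n}
    (W : (monoSubgraph (cycleGraph n) ω).Walk x y)
    (hsup : ∀ z ∈ W.support, z ≠ b₁ ∧ z ≠ b₂)
    (hx : cpos b₂ x < cpos b₂ b₁) : cpos b₂ y < cpos b₂ b₁ := by
  induction W with
  | nil => exact hx
  | @cons u v w h p ih =>
    have hu := hsup u (by simp)
    have hv := hsup v (by simp [SimpleGraph.Walk.support_cons])
    have hstep := step_cpos h.1 hu.2 hv.2
    have hvne : cpos b₂ v ≠ cpos b₂ b₁ := fun hh => hv.1 (cpos_inj hh)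
    have : cpos b₂ v < cpos b₂ b₁ := by omega
    exact ih (fun z hz => hsup z (by simp [SimpleGraph.Walk.support_cons, hz])) this

/-- The monochromatic component of `v` is an arc: it does not interleave with
vertices outside it. -/
lemma arc_no_interleave {ω : Fin n → C} {v x₁ x₂ b₁ b₂ : Fin n}
    (hx₁ : (monoSubgraph (cycleGraph n) ω).Reachable v x₁)
    (hx₂ : (monoSubgraph (cycleGraph n) ω).Reachable v x₂)
    (hb₁ : ¬ (monoSubgraph (cycleGraph n) ω).Reachable v b₁)
    (hb₂ : ¬ (monoSubgraph (cycleGraph n) ω).Reachable v b₂)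
    (h1 : cpos x₁ b₁ < cpos x₁ x₂) (h2 : cpos x₁ x₂ < cpos x₁ b₂) : False := by
  obtain ⟨W⟩ := hx₁.symm.trans hx₂
  have hsupX : ∀ z ∈ W.support, (monoSubgraph (cycleGraph n) ω).Reachable v z := by
    intro z hz
    exact hx₁.trans ⟨W.takeUntil z hz⟩
  have hsup : ∀ z ∈ W.support, z ≠ b₁ ∧ z ≠ b₂ := by
    intro z hz
    constructor
    · rintro rfl; exact hb₁ (hsupX z hz)
    · rintro rfl; exact hb₂ (hsupX z hz)
  set β₁ := cpos x₁ b₁ with hβ₁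
  set α := cpos x₁ x₂ with hα
  set β₂ := cpos x₁ b₂ with hβ₂
  have hβ₁pos : 0 < β₁ := by
    rcases Nat.eq_zero_or_pos β₁ with h | h
    · rw [hβ₁, cpos_eq_zero_iff] at h
      subst h
      exact absurd hx₁ hb₁
    · exact h
  have hβ₂n : β₂ < n := cpos_lt _ _
  have hfx₁ : cpos b₂ x₁ = n - β₂ := by
    have : cpos x₁ b₂ ≠ 0 := by omega
    exact cpos_back this
  have hb₁b₂ : cpos b₁ b₂ = β₂ - β₁ := cpos_rebase (by omega)
  have hfb₁ : cpos b₂ b₁ = n - (β₂ - β₁) := by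
    rw [cpos_back (a := b₁) (by omega), hb₁b₂]
  have hx₂b₂ : cpos x₂ b₂ = β₂ - α := cpos_rebase (by omega)
  have hfx₂ : cpos b₂ x₂ = n - (β₂ - α) := by
    rw [cpos_back (a := x₂) (by omega), hx₂b₂]
  have hstart : cpos b₂ x₁ < cpos b₂ b₁ := by omega
  have hend := walk_below W hsup hstart
  omega

/-- One flood move increases the minimal number of blocks of a good partition
by at most one. -/
lemma step_part {ω : Fin n → C} (v : Fin n) (d : C) {P' : Finset (Finset (Fin n))}
    (h : IsGoodPart (floodMove (cycleGraph n) ω v d) P') :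
    ∃ P, IsGoodPart ω P ∧ P.card ≤ P'.card + 1 := by
  classical
  set M := monoSubgraph (cycleGraph n) ω with hM
  set X : Finset (Fin n) := Finset.univ.filter (fun u => M.Reachable v u) with hX
  have hmemX : ∀ u, u ∈ X ↔ M.Reachable v u := by
    intro u; simp [hX]
  have hvX : v ∈ X := (hmemX v).mpr (SimpleGraph.Reachable.refl v)
  have hωoff : ∀ u, u ∉ X → floodMove (cycleGraph n) ω v d u = ω u := by
    intro u hu
    rw [floodMove, if_neg (fun hr => hu ((hmemX u).mpr hr))]
  set P : Finset (Finset (Fin n)) := insert X ((P'.image (fun B => B \ X)).erase ∅) with hP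
  have hmemP : ∀ D, D ∈ P → D = X ∨ (D.Nonempty ∧ ∃ B ∈ P', D = B \ X) := by
    intro D hD
    rw [hP, Finset.mem_insert] at hD
    rcases hD with hD | hD
    · exact Or.inl hD
    · rw [Finset.mem_erase] at hD
      obtain ⟨hne, hD⟩ := hD
      rw [Finset.mem_image] at hD
      obtain ⟨B, hB, hBD⟩ := hD
      exact Or.inr ⟨Finset.nonempty_iff_ne_empty.mpr hne, B, hB, hBD.symm⟩
  refine ⟨P, ⟨?_, ?_, ?_, ?_, ?_⟩, ?_⟩
  · -- nonempty
    intro D hD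
    rcases hmemP D hD with rfl | ⟨hne, _⟩
    · exact ⟨v, hvX⟩
    · exact hne
  · -- covers
    intro x
    by_cases hx : x ∈ X
    · exact ⟨X, Finset.mem_insert_self _ _, hx⟩
    · obtain ⟨B, hB, hxB⟩ := h.covers x
      refine ⟨B \ X, ?_, Finset.mem_sdiff.mpr ⟨hxB, hx⟩⟩
      rw [hP, Finset.mem_insert]
      right
      rw [Finset.mem_erase]
      constructor
      · intro hemp
        have hxm : x ∈ B \ X := Finset.mem_sdiff.mpr ⟨hxB, hx⟩
        rw [hemp] at hxm
        exact absurd hxm (Finset.notMem_empty x)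
      · exact Finset.mem_image_of_mem _ hB
  · -- disjoint
    intro D hD D' hD' hne x hxD
    rcases hmemP D hD with rfl | ⟨_, B, hB, rfl⟩ <;>
      rcases hmemP D' hD' with h2 | ⟨_, B', hB', hBD'⟩
    · exact absurd h2.symm hne
    · subst hBD'; intro hx; exact (Finset.mem_sdiff.mp hx).2 hxD
    · subst h2; exact (Finset.mem_sdiff.mp hxD).2
    · subst hBD'
      intro hx
      have hBB' : B ≠ B' := by
        rintro rfl; exact hne rfl
      exact h.disj B hB B' hB' hBB' x (Finset.mem_sdiff.mp hxD).1 (Finset.mem_sdiff.mp hx).1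
  · -- monochromatic
    intro D hD x hx y hy
    rcases hmemP D hD with rfl | ⟨_, B, hB, rfl⟩
    · have h1 := reachable_colour ((hmemX x).mp hx)
      have h2 := reachable_colour ((hmemX y).mp hy)
      rw [← h1, ← h2]
    · have hx' := Finset.mem_sdiff.mp hx
      have hy' := Finset.mem_sdiff.mp hy
      have := h.mono B hB x hx'.1 y hy'.1
      rwa [hωoff x hx'.2, hωoff y hy'.2] at this
  · -- non-crossing
    intro D hD D' hD' hne
    rcases hmemP D hD with rfl | ⟨_, B, hB, rfl⟩ <;>
      rcases hmemP D' hD' with h2 | ⟨_, B', hB', hBD'⟩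
    · exact absurd h2.symm hne
    · -- X vs B' \ X
      subst hBD'
      rintro ⟨x₁, hx₁, x₂, hx₂, b₁, hb₁, b₂, hb₂, hlt1, hlt2⟩
      have hb₁' := (Finset.mem_sdiff.mp hb₁).2
      have hb₂' := (Finset.mem_sdiff.mp hb₂).2
      exact arc_no_interleave ((hmemX x₁).mp hx₁) ((hmemX x₂).mp hx₂)
        (fun hr => hb₁' ((hmemX b₁).mpr hr)) (fun hr => hb₂' ((hmemX b₂).mpr hr)) hlt1 hlt2
    · -- B \ X vs X
      subst h2
      rintro ⟨d₁, hd₁, d₂, hd₂, x₁, hx₁, x₂, hx₂, hlt1, hlt2⟩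
      have hd₁' := (Finset.mem_sdiff.mp hd₁).2
      have hd₂' := (Finset.mem_sdiff.mp hd₂).2
      have hx₁d₁ : x₁ ≠ d₁ := by
        rintro rfl; exact hd₁' hx₁
      have hγ₁ : cpos d₁ x₁ ≠ 0 := fun hh => hx₁d₁ (cpos_eq_zero_iff.mp hh)
      have e1 : cpos x₁ d₂ = cpos d₁ d₂ - cpos d₁ x₁ := cpos_rebase (le_of_lt hlt1)
      have e2 : cpos x₁ x₂ = cpos d₁ x₂ - cpos d₁ x₁ := cpos_rebase (by omega)
      have e3 : cpos x₁ d₁ = n - cpos d₁ x₁ := cpos_back hγ₁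
      have hx₂n : cpos d₁ x₂ < n := cpos_lt _ _
      have hγ₁pos : 0 < cpos d₁ x₁ := Nat.pos_of_ne_zero hγ₁
      exact arc_no_interleave ((hmemX x₁).mp hx₁) ((hmemX x₂).mp hx₂)
        (fun hr => hd₂' ((hmemX d₂).mpr hr)) (fun hr => hd₁' ((hmemX d₁).mpr hr))
        (by omega) (by omega)
    · -- both images
      subst hBD'
      have hBB' : B ≠ B' := by rintro rfl; exact hne rfl
      intro hcr
      exact h.ncross B hB B' hB' hBB' (crossSets_mono Finset.sdiff_subset Finset.sdiff_subset hcr)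
  · -- cardinality
    calc P.card ≤ ((P'.image (fun B => B \ X)).erase ∅).card + 1 := Finset.card_insert_le _ _
    _ ≤ (P'.image (fun B => B \ X)).card + 1 := by
        have := Finset.card_erase_le (a := (∅ : Finset (Fin n))) (s := P'.image (fun B => B \ X))
        omega
    _ ≤ P'.card + 1 := by
        have := Finset.card_image_le (f := fun B => B \ X) (s := P')
        omega

/-- Any successful sequence of `k` moves yields a good partition with at most
`k + 1` blocks. -/
lemma seq_part (hn : 0 < n) (d : C) :
    ∀ (ms : List (Fin n × C)) (ω : Fin n → C),
      (∀ u, floodSeq (cycleGraph n) ms ω u = d) →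
      ∃ P, IsGoodPart ω P ∧ P.card ≤ ms.length + 1
  | [], ω, hall => by
      refine ⟨{Finset.univ}, ⟨?_, ?_, ?_, ?_, ?_⟩, by simp⟩
      · intro B hB
        rw [Finset.mem_singleton] at hB
        subst hB
        exact ⟨⟨0, hn⟩, Finset.mem_univ _⟩
      · intro x; exact ⟨Finset.univ, Finset.mem_singleton_self _, Finset.mem_univ _⟩
      · intro B hB B' hB' hne
        rw [Finset.mem_singleton] at hB hB'
        exact absurd (hB.trans hB'.symm) hne
      · intro B hB x hx y hy
        have h1 : floodSeq (cycleGraph n) [] ω x = d := hall x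
        have h2 : floodSeq (cycleGraph n) [] ω y = d := hall y
        rw [floodSeq] at h1 h2
        rw [h1, h2]
      · intro B hB B' hB' hne
        rw [Finset.mem_singleton] at hB hB'
        exact absurd (hB.trans hB'.symm) hne
  | m :: ms, ω, hall => by
      have hall' : ∀ u, floodSeq (cycleGraph n) ms (floodMove (cycleGraph n) ω m.1 m.2) u = d := by
        intro u
        have := hall u
        rwa [floodSeq] at this
      obtain ⟨P', hP', hc⟩ := seq_part hn d ms _ hall'
      obtain ⟨P, hP, hc2⟩ := step_part m.1 m.2 hP'
      exact ⟨P, hP, by simp only [List.length_cons]; omega⟩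

/-- Every colour is achievable by some sequence of moves. -/
lemma exists_flood {V : Type*} [Fintype V] (G : SimpleGraph V) (ω : V → C) (d : C) :
    ∃ ms : List (V × C), ∀ u, floodSeq G ms ω u = d := by
  classical
  have hpres : ∀ (l : List (V × C)) (ω' : V → C) (u : V),
      (∀ m ∈ l, m.2 = d) → ω' u = d → floodSeq G l ω' u = d := by
    intro l
    induction l with
    | nil => intro ω' u _ h; exact h
    | cons m ms ih =>
      intro ω' u hl h
      rw [floodSeq]
      apply ih
      · intro m' hm'; exact hl m' (List.mem_cons_of_mem _ hm')
      · rw [floodMove]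
        split
        · exact hl m (List.mem_cons_self)
        · exact h
  have hmain : ∀ (l : List V) (ω' : V → C) (u : V), u ∈ l →
      floodSeq G (l.map (fun v => (v, d))) ω' u = d := by
    intro l
    induction l with
    | nil => intro ω' u h; exact absurd h List.not_mem_nil
    | cons v vs ih =>
      intro ω' u hu
      rw [List.map_cons, floodSeq]
      rcases List.mem_cons.mp hu with rfl | hu
      · apply hpres
        · intro m hm
          rw [List.mem_map] at hm
          obtain ⟨x, -, rfl⟩ := hm
          rfl
        · simp only [floodMove]
          rw [if_pos (SimpleGraph.Reachable.refl _)]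
      · exact ih _ u hu
  refine ⟨(Finset.univ : Finset V).toList.map (fun v => (v, d)), fun u => hmain _ ω u ?_⟩
  rw [Finset.mem_toList]
  exact Finset.mem_univ u

/-! #### Counting for laminar interval families -/

/-- Interval family conditions: each interval has positive length divisible by `c`,
and any two are interior-disjoint or strictly nested. -/
def IntCond (c : ℕ) (I : Finset (ℕ × ℕ)) : Prop :=
  (∀ p ∈ I, p.1 < p.2 ∧ c ∣ p.2 - p.1) ∧
  (∀ p ∈ I, ∀ q ∈ I, p ≠ q →
     q.2 ≤ p.1 ∨ p.2 ≤ q.1 ∨ (p.1 < q.1 ∧ q.2 < p.2) ∨ (q.1 < p.1 ∧ p.2 < q.2))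

lemma intCond_mono {c : ℕ} {I J : Finset (ℕ × ℕ)} (h : IntCond c I) (hJ : J ⊆ I) :
    IntCond c J :=
  ⟨fun p hp => h.1 p (hJ hp), fun p hp q hq => h.2 p (hJ hp) q (hJ hq)⟩

lemma intervals_bound (c : ℕ) (hc : 2 ≤ c) :
    ∀ (I : Finset (ℕ × ℕ)), IntCond c I → ∀ L R : ℕ, L ≤ R →
      (∀ p ∈ I, L ≤ p.1 ∧ p.2 ≤ R) → c * I.card ≤ R - L := by
  intro I
  induction I using Finset.strongInduction with
  | _ I ih =>
    intro hcond L R hLR hbounds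
    rcases Finset.eq_empty_or_nonempty I with rfl | hne
    · simp
    · obtain ⟨p₀, hp₀, hmax⟩ := Finset.exists_max_image I (fun p => p.2 - p.1) hne
      obtain ⟨u, v⟩ := p₀
      simp only at hmax
      have h0 := hcond.1 _ hp₀
      simp only at h0
      obtain ⟨huv, hdvd⟩ := h0
      have hbb := hbounds _ hp₀
      simp only at hbb
      have hvu : c ≤ v - u := Nat.le_of_dvd (by omega) hdvd
      set Iin := I.filter (fun q => u < q.1 ∧ q.2 < v) with hIin
      set IL := I.filter (fun q => q.2 ≤ u) with hIL
      set IR := I.filter (fun q => v ≤ q.1) with hIR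
      have hsubin : Iin ⊆ I := Finset.filter_subset _ _
      have hsubL : IL ⊆ I := Finset.filter_subset _ _
      have hsubR : IR ⊆ I := Finset.filter_subset _ _
      have hp₀nin : (u, v) ∉ Iin := by simp [hIin]
      have hp₀nL : (u, v) ∉ IL := by simp [hIL]; omega
      have hp₀nR : (u, v) ∉ IR := by simp [hIR]; omega
      have hun : I.erase (u, v) = (Iin ∪ IL) ∪ IR := by
        ext q
        simp only [Finset.mem_erase, Finset.mem_union, hIin, hIL, hIR, Finset.mem_filter]
        constructor
        · rintro ⟨hqne, hq⟩
          have hcases := hcond.2 _ hp₀ q hq (by exact fun hh => hqne hh.symm)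
          have hq1 := hcond.1 q hq
          have hqmax := hmax q hq
          simp only at hcases hq1 hqmax ⊢
          rcases hcases with h | h | h | h
          · exact Or.inl (Or.inr ⟨hq, h⟩)
          · exact Or.inr ⟨hq, h⟩
          · exact Or.inl (Or.inl ⟨hq, h⟩)
          · omega
        · intro hq
          rcases hq with (⟨hq, hh⟩ | ⟨hq, hh⟩) | ⟨hq, hh⟩ <;>
            exact ⟨by rintro rfl; simp only at hh; omega, hq⟩
      have hdisj1 : Disjoint Iin IL := by
        rw [Finset.disjoint_left]
        intro q hq1 hq2
        rw [hIin, Finset.mem_filter] at hq1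
        rw [hIL, Finset.mem_filter] at hq2
        have := hcond.1 q hq1.1
        omega
      have hdisj2 : Disjoint (Iin ∪ IL) IR := by
        rw [Finset.disjoint_left]
        intro q hq1 hq2
        rw [hIR, Finset.mem_filter] at hq2
        rw [Finset.mem_union, hIin, hIL, Finset.mem_filter, Finset.mem_filter] at hq1
        have := hcond.1 q hq2.1
        rcases hq1 with h | h <;> omega
      have hcard : I.card = 1 + Iin.card + IL.card + IR.card := by
        have h1 : (I.erase (u, v)).card = I.card - 1 := Finset.card_erase_of_mem hp₀
        have h2 : ((Iin ∪ IL) ∪ IR).card = (Iin ∪ IL).card + IR.card :=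
          Finset.card_union_of_disjoint hdisj2
        have h3 : (Iin ∪ IL).card = Iin.card + IL.card := Finset.card_union_of_disjoint hdisj1
        have h4 : 0 < I.card := Finset.card_pos.mpr hne
        rw [hun] at h1
        omega
      have hssin : Iin ⊂ I := Finset.ssubset_iff_of_subset hsubin |>.mpr ⟨_, hp₀, hp₀nin⟩
      have hssL : IL ⊂ I := Finset.ssubset_iff_of_subset hsubL |>.mpr ⟨_, hp₀, hp₀nL⟩
      have hssR : IR ⊂ I := Finset.ssubset_iff_of_subset hsubR |>.mpr ⟨_, hp₀, hp₀nR⟩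
      have hbin : c * Iin.card ≤ (v - 1) - (u + 1) := by
        apply ih _ hssin (intCond_mono hcond hsubin) _ _ (by omega)
        intro p hp
        rw [hIin, Finset.mem_filter] at hp
        omega
      have hbL : c * IL.card ≤ u - L := by
        apply ih _ hssL (intCond_mono hcond hsubL) _ _ (by omega)
        intro p hp
        rw [hIL, Finset.mem_filter] at hp
        have := hbounds p hp.1
        omega
      have hbR : c * IR.card ≤ R - v := by
        apply ih _ hssR (intCond_mono hcond hsubR) _ _ (by omega)
        intro p hp
        rw [hIR, Finset.mem_filter] at hp
        have := hbounds p hp.1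
        omega
      have hround : c * Iin.card ≤ v - u - c := by
        rcases Nat.eq_zero_or_pos Iin.card with h0 | h0
        · rw [h0]; omega
        · have hdvd2 : c ∣ (v - u) - c * Iin.card := Nat.dvd_sub hdvd ⟨Iin.card, rfl⟩
          have hpos : 0 < (v - u) - c * Iin.card := by omega
          have := Nat.le_of_dvd hpos hdvd2
          omega
      have hmul : c * I.card = c + c * Iin.card + c * IL.card + c * IR.card := by
        rw [hcard]; ring
      omega

/-! #### From good partitions to interval families -/

/-- Consecutive pairs (as `ℕ` values) of a finset of `Fin n`. -/
noncomputable def pairsOf (B : Finset (Fin n)) : Finset (ℕ × ℕ) :=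
  (B.filter (fun y => ∃ z ∈ B, z < y)).attach.image
    (fun y => (((B.filter (· < y.1)).max'
      (by
        obtain ⟨hy, z, hz, hzy⟩ := Finset.mem_filter.mp y.2
        exact ⟨z, Finset.mem_filter.mpr ⟨hz, hzy⟩⟩)).val, y.1.val))

lemma pairsOf_mem {B : Finset (Fin n)} {p : ℕ × ℕ} (hp : p ∈ pairsOf B) :
    ∃ x ∈ B, ∃ y ∈ B, p = (x.val, y.val) ∧ x < y ∧ ∀ z ∈ B, z < y → z ≤ x := by
  rw [pairsOf, Finset.mem_image] at hp
  obtain ⟨y, _, hy⟩ := hp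
  have hymem := Finset.mem_filter.mp y.2
  have hne : (B.filter (· < y.1)).Nonempty := by
    obtain ⟨hy', z, hz, hzy⟩ := hymem
    exact ⟨z, Finset.mem_filter.mpr ⟨hz, hzy⟩⟩
  have hxmem := Finset.mem_filter.mp ((B.filter (· < y.1)).max'_mem hne)
  refine ⟨(B.filter (· < y.1)).max' hne, hxmem.1, y.1, hymem.1, ?_, hxmem.2, ?_⟩
  · rw [← hy]
  · intro z hz hzy
    exact Finset.le_max' (B.filter (· < y.1)) z (Finset.mem_filter.mpr ⟨hz, hzy⟩)

lemma pairsOf_card {B : Finset (Fin n)} (hB : B.Nonempty) :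
    B.card ≤ (pairsOf B).card + 1 := by
  have hinj : Function.Injective
      (fun y : {x // x ∈ B.filter (fun y => ∃ z ∈ B, z < y)} =>
        (((B.filter (· < y.1)).max'
          (by
            obtain ⟨hy, z, hz, hzy⟩ := Finset.mem_filter.mp y.2
            exact ⟨z, Finset.mem_filter.mpr ⟨hz, hzy⟩⟩)).val, y.1.val)) := by
    intro a b hab
    simp only [Prod.mk.injEq] at hab
    exact Subtype.ext (Fin.ext hab.2)
  have h1 : (pairsOf B).card = (B.filter (fun y => ∃ z ∈ B, z < y)).attach.card := by
    rw [pairsOf]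
    exact Finset.card_image_of_injective _ hinj
  rw [h1, Finset.card_attach]
  have h2 : B.filter (fun y => ∃ z ∈ B, z < y) = B.erase (B.min' hB) := by
    ext y
    rw [Finset.mem_filter, Finset.mem_erase]
    constructor
    · rintro ⟨hy, z, hz, hzy⟩
      refine ⟨?_, hy⟩
      rintro rfl
      exact absurd (B.min'_le z hz) (not_le.mpr hzy)
    · rintro ⟨hne, hy⟩
      refine ⟨hy, B.min' hB, B.min'_mem hB, ?_⟩
      exact lt_of_le_of_ne (B.min'_le y hy) (Ne.symm hne)
  rw [h2, Finset.card_erase_of_mem (B.min'_mem hB)]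
  omega

lemma pairsOf_same {B : Finset (Fin n)} {p q : ℕ × ℕ}
    (hp : p ∈ pairsOf B) (hq : q ∈ pairsOf B) (hne : p ≠ q) :
    q.2 ≤ p.1 ∨ p.2 ≤ q.1 := by
  obtain ⟨x, hx, y, hy, rfl, hxy, hmax⟩ := pairsOf_mem hp
  obtain ⟨x', hx', y', hy', rfl, hxy', hmax'⟩ := pairsOf_mem hq
  rcases lt_trichotomy y y' with h | h | h
  · right; exact Fin.le_iff_val_le_val.mp (hmax' y hy h)
  · subst h
    have h1 : x ≤ x' := hmax' x hx hxy
    have h2 : x' ≤ x := hmax x' hx' hxy'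
    exact absurd (by rw [le_antisymm h1 h2]) hne
  · left; exact Fin.le_iff_val_le_val.mp (hmax y' hy' h)

lemma pairsOf_cross {ω : Fin n → C} {P : Finset (Finset (Fin n))} (hP : IsGoodPart ω P)
    {B B' : Finset (Fin n)} (hB : B ∈ P) (hB' : B' ∈ P) (hBB' : B ≠ B')
    {p q : ℕ × ℕ} (hp : p ∈ pairsOf B) (hq : q ∈ pairsOf B') :
    q.2 ≤ p.1 ∨ p.2 ≤ q.1 ∨ (p.1 < q.1 ∧ q.2 < p.2) ∨ (q.1 < p.1 ∧ p.2 < q.2) := by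
  obtain ⟨x, hx, y, hy, rfl, hxy, -⟩ := pairsOf_mem hp
  obtain ⟨x', hx', y', hy', rfl, hxy', -⟩ := pairsOf_mem hq
  have hdisj : ∀ z, z ∈ B → z ∈ B' → False := fun z h1 h2 => hP.disj B hB B' hB' hBB' z h1 h2
  have hvne : ∀ (z w : Fin n), z ∈ B → w ∈ B' → z.val ≠ w.val := by
    intro z w h1 h2 hzw
    exact hdisj z h1 (by rwa [Fin.ext hzw])
  simp only at *
  have d1 := hvne x x' hx hx'
  have d2 := hvne x y' hx hy'
  have d3 := hvne y x' hy hx'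
  have d4 := hvne y y' hy hy'
  have hxy0 : x.val < y.val := hxy
  have hxy0' : x'.val < y'.val := hxy'
  by_contra hcon
  push_neg at hcon
  obtain ⟨c1, c2, c3, c4⟩ := hcon
  rcases lt_trichotomy x.val x'.val with h | h | h
  · -- pattern x < x' < y < y'
    have ho1 : x'.val < y.val := by omega
    have ho2 : y.val < y'.val := by omega
    exact hP.ncross B hB B' hB' hBB'
      ⟨x, hx, y, hy, x', hx', y', hy',
        by rw [cpos_linear (le_of_lt h), cpos_linear (le_of_lt hxy0),
          cpos_linear (by omega : x.val ≤ y'.val)]; omega⟩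
  · exact d1 h
  · -- pattern x' < x < y' < y
    have hB'B : B' ≠ B := hBB'.symm
    have ho1 : x.val < y'.val := by omega
    have ho2 : y'.val < y.val := by omega
    exact hP.ncross B' hB' B hB hB'B
      ⟨x', hx', y', hy', x, hx, y, hy,
        by rw [cpos_linear (le_of_lt h), cpos_linear (le_of_lt hxy0'),
          cpos_linear (by omega : x'.val ≤ y.val)]; omega⟩

lemma rainbow_dvd {c r : ℕ} {ω : Fin n → C} (hrain : IsShiftedRainbow c r ω)
    {x y : Fin n} (hω : ω x = ω y) (hle : x.val ≤ y.val) : c ∣ y.val - x.val := by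
  obtain ⟨e, ⟨einj, -⟩, he⟩ := hrain
  rw [he x, he y] at hω
  have h1 := einj hω
  have h2 : ((x.val + 1 : ℕ) : ZMod c) = ((y.val + 1 : ℕ) : ZMod c) := sub_left_inj.mp h1
  have h3 : (x.val + 1) ≡ (y.val + 1) [MOD c] := (ZMod.natCast_eq_natCast_iff _ _ _).mp h2
  have h4 : x.val ≡ y.val [MOD c] := Nat.ModEq.add_right_cancel' 1 h3
  exact (Nat.modEq_iff_dvd' hle).mp h4

/-- For a rainbow colouring, every good partition has at least `n - ⌈n/c⌉ + 1` blocks. -/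
lemma goodPart_card {c r : ℕ} (hc : 2 ≤ c) (hn : 3 ≤ n) {ω : Fin n → C}
    (hrain : IsShiftedRainbow c r ω) {P : Finset (Finset (Fin n))} (hP : IsGoodPart ω P) :
    n + 1 ≤ P.card + (n + c - 1) / c := by
  classical
  set I : Finset (ℕ × ℕ) := P.biUnion pairsOf with hI
  have hcond : IntCond c I := by
    constructor
    · intro p hp
      rw [hI, Finset.mem_biUnion] at hp
      obtain ⟨B, hB, hp⟩ := hp
      obtain ⟨x, hx, y, hy, rfl, hxy, -⟩ := pairsOf_mem hp
      exact ⟨hxy, rainbow_dvd hrain (hP.mono B hB x hx y hy) (le_of_lt hxy)⟩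
    · intro p hp q hq hne
      rw [hI, Finset.mem_biUnion] at hp hq
      obtain ⟨B, hB, hp⟩ := hp
      obtain ⟨B', hB', hq⟩ := hq
      by_cases hBB' : B = B'
      · subst hBB'
        rcases pairsOf_same hp hq hne with h | h
        · exact Or.inl h
        · exact Or.inr (Or.inl h)
      · exact pairsOf_cross hP hB hB' hBB' hp hq
  have hbound : c * I.card ≤ (n - 1) - 0 := by
    apply intervals_bound c hc I hcond 0 (n - 1) (by omega)
    intro p hp
    rw [hI, Finset.mem_biUnion] at hp
    obtain ⟨B, hB, hp⟩ := hp
    obtain ⟨x, hx, y, hy, rfl, hxy, -⟩ := pairsOf_mem hp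
    have := y.isLt
    simp only
    omega
  have hdisjU : ∀ B₁ ∈ P, ∀ B₂ ∈ P, B₁ ≠ B₂ → Disjoint (pairsOf B₁) (pairsOf B₂) := by
    intro B₁ h1 B₂ h2 h12
    rw [Finset.disjoint_left]
    intro p hp1 hp2
    obtain ⟨x, hx, y, hy, hpe, -, -⟩ := pairsOf_mem hp1
    obtain ⟨x', hx', y', hy', hpe', -, -⟩ := pairsOf_mem hp2
    have : y = y' := by
      apply Fin.ext
      have e1 : p.2 = y.val := by rw [hpe]
      have e2 : p.2 = y'.val := by rw [hpe']
      omega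
    subst this
    exact hP.disj B₁ h1 B₂ h2 h12 y hy hy'
  have hIcard : I.card = ∑ B ∈ P, (pairsOf B).card := Finset.card_biUnion hdisjU
  have hcover : (Finset.univ : Finset (Fin n)) ⊆ P.biUnion id := by
    intro x _
    rw [Finset.mem_biUnion]
    obtain ⟨B, hB, hx⟩ := hP.covers x
    exact ⟨B, hB, hx⟩
  have hsum : n ≤ ∑ B ∈ P, B.card := by
    calc n = (Finset.univ : Finset (Fin n)).card := by simp
    _ ≤ (P.biUnion id).card := Finset.card_le_card hcover
    _ ≤ ∑ B ∈ P, (id B).card := Finset.card_biUnion_le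
  have hsum2 : ∑ B ∈ P, B.card ≤ ∑ B ∈ P, ((pairsOf B).card + 1) := by
    apply Finset.sum_le_sum
    intro B hB
    exact pairsOf_card (hP.nonemp B hB)
  have hsum3 : ∑ B ∈ P, ((pairsOf B).card + 1) = I.card + P.card := by
    rw [Finset.sum_add_distrib, hIcard]
    simp
  have hkey : n ≤ I.card + P.card := by omega
  have hdiv : I.card + 1 ≤ (n + c - 1) / c := by
    rw [Nat.le_div_iff_mul_le (by omega)]
    have : (I.card + 1) * c = c * I.card + c := by ring
    omega
  omega

end RainbowAux

/-- If `ω` is a `C`-rainbow colouring of the cycle `G` on `n` vertices (i.e. `ω` is an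
`r`-shifted `C`-rainbow colouring, for some `r`, of the path obtained by deleting one
edge of the cycle), where `|C| = c ≥ 2`, then `m(G, ω) ≥ n - ⌈n / c⌉`. -/
theorem rainbow_cycle_floodCostMin_ge {C : Type*} (n c : ℕ) (hn : 3 ≤ n) (hc : 2 ≤ c)
    (ω : Fin n → C) (h : ∃ r, r < n ∧ IsShiftedRainbow c r ω) :
    n - (n + c - 1) / c ≤ floodCostMin (SimpleGraph.cycleGraph n) ω := by
  obtain ⟨r, -, hrain⟩ := h
  have hCne : Nonempty C := by
    obtain ⟨e, -, -⟩ := hrain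
    exact ⟨e 0⟩
  have hcost : ∀ d : C, n - (n + c - 1) / c ≤ floodCost (SimpleGraph.cycleGraph n) ω d := by
    intro d
    apply le_csInf
    · obtain ⟨ms, hms⟩ := RainbowAux.exists_flood (SimpleGraph.cycleGraph n) ω d
      exact ⟨ms.length, ms, rfl, hms⟩
    · rintro k ⟨ms, rfl, hflood⟩
      obtain ⟨P, hP, hcard⟩ := RainbowAux.seq_part (by omega : 0 < n) d ms ω hflood
      have hge := RainbowAux.goodPart_card hc hn hrain hP
      omega
  apply le_csInf
  · obtain ⟨d⟩ := hCne
    exact ⟨floodCost (SimpleGraph.cycleGraph n) ω d, d, rfl⟩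
  · rintro k ⟨d, rfl⟩
    exact hcost d
end
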